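/- arXiv:0902.0396 — 2 statements merged into one kernel-verified Lean document; each statement's English description precedes it below -/
import Mathlib

section
/- Let κ be a positive definite kernel on a locally compact Hausdorff space X, A an (m,p)-condenser, g : X → (0,∞) continuous, and a = (a_i)_{i∈I} with a_i > 0. If K ranges over the increasing ordered family {K}_A of all compact (m,p)-condensers K ≺ A (i.e. K_i ⊂ A_i for all i ∈ I), then cap(A,a,g) = lim_{K↑A} cap(K,a,g). -/
open MeasureTheory Filter Topology Set ENNReal NNReal

noncomputable section

namespace Zorii

variable {X : Type} [TopologicalSpace X] [MeasurableSpace X]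

/-- A nonnegative Radon measure: inner regular and finite on compacts. -/
def IsRadon (μ : Measure X) : Prop :=
  μ.InnerRegular ∧ IsFiniteMeasureOnCompacts μ

/-- `μ` is concentrated on `E`. -/
def ConcOn (μ : Measure X) (E : Set X) : Prop := μ Eᶜ = 0

/-- A kernel is a lower semicontinuous function on `X × X`. -/
def IsKernel (κ : X → X → ℝ≥0∞) : Prop :=
  LowerSemicontinuous (Function.uncurry κ)

/-- Mutual energy of two nonnegative measures. -/
def mutualE (κ : X → X → ℝ≥0∞) (μ ν : Measure X) : ℝ≥0∞ :=
  ∫⁻ x, ∫⁻ y, κ x y ∂ν ∂μ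

/-- A signed Radon measure is represented by an ordered pair (positive part, negative part). -/
def IsRadonPair (P : Measure X × Measure X) : Prop := IsRadon P.1 ∧ IsRadon P.2

/-- Finiteness of the energy of a signed measure, componentwise. -/
def FinEnergy (κ : X → X → ℝ≥0∞) (P : Measure X × Measure X) : Prop :=
  mutualE κ P.1 P.1 < ⊤ ∧ mutualE κ P.2 P.2 < ⊤ ∧
    mutualE κ P.1 P.2 < ⊤ ∧ mutualE κ P.2 P.1 < ⊤

/-- Membership in the pre-Hilbert space `E` of (signed) Radon measures of finite energy. -/
def inE (κ : X → X → ℝ≥0∞) (P : Measure X × Measure X) : Prop :=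
  IsRadonPair P ∧ FinEnergy κ P

/-- The energy scalar product of two signed measures of finite energy. -/
def eInner (κ : X → X → ℝ≥0∞) (P Q : Measure X × Measure X) : ℝ :=
  (mutualE κ P.1 Q.1 + mutualE κ P.2 Q.2).toReal -
    (mutualE κ P.1 Q.2 + mutualE κ P.2 Q.1).toReal

/-- The energy (squared seminorm) of a signed measure. -/
def normSq (κ : X → X → ℝ≥0∞) (P : Measure X × Measure X) : ℝ := eInner κ P P

/-- Difference of two signed measures (as pairs). -/
def pairSub (P Q : Measure X × Measure X) : Measure X × Measure X :=
  (P.1 + Q.2, P.2 + Q.1)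

/-- `‖P - Q‖²`. -/
def dist2 (κ : X → X → ℝ≥0∞) (P Q : Measure X × Measure X) : ℝ :=
  normSq κ (pairSub P Q)

/-- A positive definite kernel: symmetric, with nonnegative energies. -/
def PositiveDefinite (κ : X → X → ℝ≥0∞) : Prop :=
  (∀ x y, κ x y = κ y x) ∧
    ∀ P : Measure X × Measure X, IsRadonPair P → FinEnergy κ P → 0 ≤ normSq κ P

/-- A strictly positive definite kernel: the energy seminorm is a norm. -/
def StrictlyPositiveDefinite (κ : X → X → ℝ≥0∞) : Prop :=
  PositiveDefinite κ ∧ ∀ P, inE κ P → normSq κ P = 0 → P.1 = P.2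

/-- Potential of a nonnegative measure. -/
def potOf (κ : X → X → ℝ≥0∞) (ν : Measure X) (x : X) : ℝ≥0∞ := ∫⁻ y, κ x y ∂ν

/-- Potential of a signed measure, with values in the extended reals. -/
def pot (κ : X → X → ℝ≥0∞) (P : Measure X × Measure X) (x : X) : EReal :=
  (potOf κ P.1 x : EReal) - (potOf κ P.2 x : EReal)

/-- The interior capacity of a set `E ⊆ X`. -/
def setCap (κ : X → X → ℝ≥0∞) (E : Set X) : ℝ≥0∞ :=
  (⨅ (ν : Measure X) (_ : IsRadon ν ∧ ConcOn ν E ∧ ν Set.univ = 1), mutualE κ ν ν)⁻¹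

/-- `Q` holds nearly everywhere (n.e.) in `E`. -/
def NearlyEverywhereOn (κ : X → X → ℝ≥0∞) (Q : X → Prop) (E : Set X) : Prop :=
  setCap κ {x | x ∈ E ∧ ¬ Q x} = 0

/-- The "inf" of a function over `E`, understood nearly everywhere. -/
def nearInf (κ : X → X → ℝ≥0∞) (f : X → EReal) (E : Set X) : EReal :=
  sSup ((fun q : ℝ => (q : EReal)) ''
    {q : ℝ | NearlyEverywhereOn κ (fun x => (q : EReal) ≤ f x) E})

/-- The support of a measure. -/
def msupport (μ : Measure X) : Set X :=
  {x | ∀ U : Set X, IsOpen U → x ∈ U → μ U ≠ 0}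

/-- The vague topology on measures: the coarsest topology making
`ν ↦ ∫ f dν` continuous for all continuous compactly supported `f`. -/
def vagueTop (X : Type) [TopologicalSpace X] [MeasurableSpace X] :
    TopologicalSpace (Measure X) :=
  ⨅ (f : X → ℝ) (_ : Continuous f ∧ HasCompactSupport f),
    TopologicalSpace.induced (fun ν : Measure X => ∫ x, f x ∂ν) inferInstance

/-- The `A`-vague topology: coordinatewise vague topology. -/
def avagueTop (X : Type) [TopologicalSpace X] [MeasurableSpace X] (k : ℕ) :
    TopologicalSpace (Fin k → Measure X) :=
  @Pi.topologicalSpace (Fin k) (fun _ => Measure X) (fun _ => vagueTop X)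

/-- A net in `Y`: a map from a nonempty directed preordered index type. -/
structure Net (Y : Type) where
  ι : Type
  pre : Preorder ι
  ne : Nonempty ι
  dir : IsDirected ι (fun a b => pre.toLE.le a b)
  toFun : ι → Y

/-- The `atTop` filter of a net's index. -/
def Net.atTopF {Y : Type} (n : Net Y) : Filter n.ι := @Filter.atTop n.ι n.pre

/-- The order relation of a net's index. -/
def Net.leRel {Y : Type} (n : Net Y) (s t : n.ι) : Prop := @LE.le n.ι n.pre.toLE s t

/-- Sign of the index `i`: `+1` for the first `m` indices, `-1` otherwise. -/
def sgn (m : ℕ) {k : ℕ} (i : Fin k) : ℝ := if (i : ℕ) < m then 1 else -1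

/-- An `(m,p)`-condenser. -/
structure Condenser (X : Type) [TopologicalSpace X] (m p : ℕ) where
  plate : Fin (m + p) → Set X
  plate_nonempty : ∀ i, (plate i).Nonempty
  separated : ∀ i j : Fin (m + p), (i : ℕ) < m → ¬ ((j : ℕ) < m) →
    closure (plate i) ∩ closure (plate j) = ∅

variable {m p : ℕ}

/-- The closure of a condenser. -/
def Condenser.cl (A : Condenser X m p) : Condenser X m p where
  plate i := closure (A.plate i)
  plate_nonempty i := (A.plate_nonempty i).closure
  separated i j hi hj := by simpa [closure_closure] using A.separated i j hi hj

/-- `B ≺ A` : plates are contained one in another. -/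
def Condenser.prec (B A : Condenser X m p) : Prop := ∀ i, B.plate i ⊆ A.plate i

def Condenser.unionAll (A : Condenser X m p) : Set X := ⋃ i, A.plate i

def Condenser.posUnion (A : Condenser X m p) : Set X :=
  ⋃ i ∈ {i : Fin (m + p) | (i : ℕ) < m}, A.plate i

def Condenser.negUnion (A : Condenser X m p) : Set X :=
  ⋃ i ∈ {i : Fin (m + p) | ¬ (i : ℕ) < m}, A.plate i

/-- A measure associated with the condenser `A`: an `I`-tuple of nonnegative Radon
measures, the `i`-th one concentrated on the plate `A_i`. -/
def Assoc (A : Condenser X m p) (μ : Fin (m + p) → Measure X) : Prop :=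
  ∀ i, IsRadon (μ i) ∧ ConcOn (μ i) (A.plate i)

def Rpos (m p : ℕ) (μ : Fin (m + p) → Measure X) : Measure X :=
  ∑ i ∈ Finset.univ.filter (fun i : Fin (m + p) => (i : ℕ) < m), μ i

def Rneg (m p : ℕ) (μ : Fin (m + p) → Measure X) : Measure X :=
  ∑ i ∈ Finset.univ.filter (fun i : Fin (m + p) => ¬ (i : ℕ) < m), μ i

/-- The `R`-image of an associated measure (its positive and negative parts). -/
def Rpair (m p : ℕ) (μ : Fin (m + p) → Measure X) : Measure X × Measure X :=
  (Rpos m p μ, Rneg m p μ)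

/-- `E(A)`: associated measures of finite energy. -/
def inEA (κ : X → X → ℝ≥0∞) (A : Condenser X m p) (μ : Fin (m + p) → Measure X) : Prop :=
  Assoc A μ ∧ FinEnergy κ (Rpair m p μ)

def gInt (g : X → ℝ) (ν : Measure X) : ℝ≥0∞ := ∫⁻ x, ENNReal.ofReal (g x) ∂ν

/-- `E(A,b,g)` with prescribed `g`-masses `b i`. -/
def inEAb (κ : X → X → ℝ≥0∞) (A : Condenser X m p) (b : Fin (m + p) → ℝ≥0∞)
    (g : X → ℝ) (μ : Fin (m + p) → Measure X) : Prop :=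
  inEA κ A μ ∧ ∀ i, gInt g (μ i) = b i

/-- `E(A,≤b,g)`. -/
def inEAble (κ : X → X → ℝ≥0∞) (A : Condenser X m p) (b : Fin (m + p) → ℝ≥0∞)
    (g : X → ℝ) (μ : Fin (m + p) → Measure X) : Prop :=
  inEA κ A μ ∧ ∀ i, gInt g (μ i) ≤ b i

/-- `E⁰(A,b,g)`: members of `E(A,b,g)` whose coordinates are compactly supported
inside the respective plates. -/
def inE0b (κ : X → X → ℝ≥0∞) (A : Condenser X m p) (b : Fin (m + p) → ℝ≥0∞)
    (g : X → ℝ) (μ : Fin (m + p) → Measure X) : Prop :=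
  inEAb κ A b g μ ∧ ∀ i, ∃ K : Set X, IsCompact K ∧ K ⊆ A.plate i ∧ ConcOn (μ i) K

def assocNormSq (κ : X → X → ℝ≥0∞) (m p : ℕ) (μ : Fin (m + p) → Measure X) : ℝ :=
  normSq κ (Rpair m p μ)

def sdist2 (κ : X → X → ℝ≥0∞) (m p : ℕ) (μ ν : Fin (m + p) → Measure X) : ℝ :=
  dist2 κ (Rpair m p μ) (Rpair m p ν)

/-- The mutual energy `κ(μ^i, μ)` of the `i`-th coordinate with the whole measure. -/
def coordE (κ : X → X → ℝ≥0∞) (m p : ℕ) (μ : Fin (m + p) → Measure X) (i : Fin (m + p)) : ℝ :=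
  eInner κ (μ i, 0) (Rpair m p μ)

def aVec {k : ℕ} (a : Fin k → ℝ) : Fin k → ℝ≥0∞ := fun i => ENNReal.ofReal (a i)

/-- `‖E(A,b,g)‖²`. -/
def minE (κ : X → X → ℝ≥0∞) (A : Condenser X m p) (b : Fin (m + p) → ℝ≥0∞)
    (g : X → ℝ) : ℝ≥0∞ :=
  ⨅ (μ : Fin (m + p) → Measure X) (_ : inEAb κ A b g μ), ENNReal.ofReal (assocNormSq κ m p μ)

/-- `‖E⁰(A,b,g)‖²`. -/
def minE0 (κ : X → X → ℝ≥0∞) (A : Condenser X m p) (b : Fin (m + p) → ℝ≥0∞)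
    (g : X → ℝ) : ℝ≥0∞ :=
  ⨅ (μ : Fin (m + p) → Measure X) (_ : inE0b κ A b g μ), ENNReal.ofReal (assocNormSq κ m p μ)

/-- The interior capacity of the condenser `A`. -/
def cap (κ : X → X → ℝ≥0∞) (A : Condenser X m p) (a : Fin (m + p) → ℝ) (g : X → ℝ) : ℝ≥0∞ :=
  (minE κ A (aVec a) g)⁻¹

/-- The vector `a · cap(A,a,g)`. -/
def aCap (κ : X → X → ℝ≥0∞) (A : Condenser X m p) (a : Fin (m + p) → ℝ) (g : X → ℝ) :
    Fin (m + p) → ℝ≥0∞ :=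
  fun i => ENNReal.ofReal (a i) * cap κ A a g

def AVagueTendstoF {ι : Type} {k : ℕ} (F : Filter ι) (μs : ι → (Fin k → Measure X))
    (μ : Fin k → Measure X) : Prop :=
  @Filter.Tendsto ι (Fin k → Measure X) μs F (@nhds _ (avagueTop X k) μ)

def AVagueClusterPtF {ι : Type} {k : ℕ} (F : Filter ι) (μs : ι → (Fin k → Measure X))
    (μ : Fin k → Measure X) : Prop :=
  @MapClusterPt (Fin k → Measure X) (avagueTop X k) ι μ F μs

def StrongTendstoF (κ : X → X → ℝ≥0∞) (m p : ℕ) {ι : Type} (F : Filter ι)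
    (μs : ι → (Fin (m + p) → Measure X)) (χ : Fin (m + p) → Measure X) : Prop :=
  Tendsto (fun s => sdist2 κ m p (μs s) χ) F (nhds 0)

def StrongClusterPtF (κ : X → X → ℝ≥0∞) (m p : ℕ) {ι : Type} (F : Filter ι)
    (μs : ι → (Fin (m + p) → Measure X)) (χ : Fin (m + p) → Measure X) : Prop :=
  ∀ ε : ℝ, 0 < ε → ∃ᶠ s in F, sdist2 κ m p (μs s) χ < ε

/-- A minimizing net: a net in `E⁰(A,b,g)` whose energies tend to `‖E(A,b,g)‖²`
(the class `𝕄(A,b,g)`). -/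
def IsMinNet (κ : X → X → ℝ≥0∞) (A : Condenser X m p) (b : Fin (m + p) → ℝ≥0∞)
    (g : X → ℝ) (n : Net (Fin (m + p) → Measure X)) : Prop :=
  (∀ s, inE0b κ A b g (n.toFun s)) ∧
    Tendsto (fun s => ENNReal.ofReal (assocNormSq κ m p (n.toFun s))) n.atTopF
      (nhds (minE κ A b g))

/-- `M(A,b,g)`: `A`-vague cluster points (within `𝔐(Ā)`) of minimizing nets. -/
def Mset (κ : X → X → ℝ≥0∞) (A : Condenser X m p) (b : Fin (m + p) → ℝ≥0∞)
    (g : X → ℝ) : Set (Fin (m + p) → Measure X) :=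
  {χ | Assoc A.cl χ ∧ ∃ n : Net (Fin (m + p) → Measure X),
    IsMinNet κ A b g n ∧ AVagueClusterPtF n.atTopF n.toFun χ}

/-- `M'(A,b,g)`: strong cluster points (within `E(Ā)`) of minimizing nets. -/
def M'set (κ : X → X → ℝ≥0∞) (A : Condenser X m p) (b : Fin (m + p) → ℝ≥0∞)
    (g : X → ℝ) : Set (Fin (m + p) → Measure X) :=
  {χ | inEA κ A.cl χ ∧ ∃ n : Net (Fin (m + p) → Measure X),
    IsMinNet κ A b g n ∧ StrongClusterPtF κ m p n.atTopF n.toFun χ}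

/-- `M'_E(A,b,g)`: the equivalence class in `E` of `Rχ`, `χ ∈ M'(A,b,g)`. -/
def M'E (κ : X → X → ℝ≥0∞) (A : Condenser X m p) (b : Fin (m + p) → ℝ≥0∞)
    (g : X → ℝ) : Set (Measure X × Measure X) :=
  {P | inE κ P ∧ ∃ χ ∈ M'set κ A b g, dist2 κ P (Rpair m p χ) = 0}

/-- Fuglede's consistency property (C): every strong Cauchy net in `E⁺` converges
strongly to each of its vague cluster points. -/
def Consistent (κ : X → X → ℝ≥0∞) : Prop :=
  ∀ n : Net (Measure X),
    (∀ s, IsRadon (n.toFun s) ∧ mutualE κ (n.toFun s) (n.toFun s) < ⊤) →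
    (∀ ε : ℝ, 0 < ε → ∃ s₀, ∀ s, n.leRel s₀ s → ∀ t, n.leRel s₀ t →
      dist2 κ (n.toFun s, 0) (n.toFun t, 0) < ε) →
    ∀ ν₀ : Measure X, @MapClusterPt (Measure X) (vagueTop X) n.ι ν₀ n.atTopF n.toFun →
      Tendsto (fun s => dist2 κ (n.toFun s, 0) (ν₀, 0)) n.atTopF (nhds 0)

/-- A perfect kernel: consistent and strictly positive definite. -/
def PerfectKernel (κ : X → X → ℝ≥0∞) : Prop :=
  Consistent κ ∧ StrictlyPositiveDefinite κ

/-- The constants `c_i(ν)` in the definition of the class `Γ̂(A,a,g)`: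
`α_i a_i κ(x,ν) ≥ c_i g(x)` n.e. in `A_i` for all `i`, and `∑ c_i ≥ 1`. -/
def ConstFor (κ : X → X → ℝ≥0∞) (A : Condenser X m p) (a : Fin (m + p) → ℝ) (g : X → ℝ)
    (ν : Measure X × Measure X) (c : Fin (m + p) → ℝ) : Prop :=
  (∀ i, NearlyEverywhereOn κ
    (fun x => ((c i * g x : ℝ) : EReal) ≤ ((sgn m i * a i : ℝ) : EReal) * pot κ ν x)
    (A.plate i)) ∧
  1 ≤ ∑ i, c i

/-- Same as `ConstFor`, but with `∑ c_i = 1` (the class `Γ̂*`). -/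
def ConstForEq (κ : X → X → ℝ≥0∞) (A : Condenser X m p) (a : Fin (m + p) → ℝ) (g : X → ℝ)
    (ν : Measure X × Measure X) (c : Fin (m + p) → ℝ) : Prop :=
  (∀ i, NearlyEverywhereOn κ
    (fun x => ((c i * g x : ℝ) : EReal) ≤ ((sgn m i * a i : ℝ) : EReal) * pot κ ν x)
    (A.plate i)) ∧
  (∑ i, c i) = 1

/-- The class `Γ̂(A,a,g)`. -/
def Gammahat (κ : X → X → ℝ≥0∞) (A : Condenser X m p) (a : Fin (m + p) → ℝ)
    (g : X → ℝ) : Set (Measure X × Measure X) :=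
  {ν | inE κ ν ∧ ∃ c, ConstFor κ A a g ν c}

/-- The class `Γ̂*(A,a,g)`. -/
def GammahatStar (κ : X → X → ℝ≥0∞) (A : Condenser X m p) (a : Fin (m + p) → ℝ)
    (g : X → ℝ) : Set (Measure X × Measure X) :=
  {ν | inE κ ν ∧ ∃ c, ConstForEq κ A a g ν c}

/-- `‖Γ̂(A,a,g)‖²`. -/
def GammahatInf (κ : X → X → ℝ≥0∞) (A : Condenser X m p) (a : Fin (m + p) → ℝ)
    (g : X → ℝ) : ℝ≥0∞ :=
  ⨅ (ν : Measure X × Measure X) (_ : ν ∈ Gammahat κ A a g), ENNReal.ofReal (normSq κ ν)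

/-- `Ĝ(A,a,g)`: minimizers in the `Γ̂(A,a,g)`-problem. -/
def Ghat (κ : X → X → ℝ≥0∞) (A : Condenser X m p) (a : Fin (m + p) → ℝ)
    (g : X → ℝ) : Set (Measure X × Measure X) :=
  {ν | ν ∈ Gammahat κ A a g ∧ ∀ ν' ∈ Gammahat κ A a g, normSq κ ν ≤ normSq κ ν'}

/-- The class `Γ(A,a,g)` of associated measures. -/
def GammaSet (κ : X → X → ℝ≥0∞) (A : Condenser X m p) (a : Fin (m + p) → ℝ)
    (g : X → ℝ) : Set (Fin (m + p) → Measure X) :=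
  {μ | inEA κ A.cl μ ∧ ∃ c, ConstFor κ A a g (Rpair m p μ) c}

/-- `G(A,a,g)`: minimizers in the `Γ(A,a,g)`-problem. -/
def Gset (κ : X → X → ℝ≥0∞) (A : Condenser X m p) (a : Fin (m + p) → ℝ)
    (g : X → ℝ) : Set (Fin (m + p) → Measure X) :=
  {μ | μ ∈ GammaSet κ A a g ∧
    ∀ μ' ∈ GammaSet κ A a g, assocNormSq κ m p μ ≤ assocNormSq κ m p μ'}

/-- The interior capacitary constants of `A`. -/
def IsCapConst (κ : X → X → ℝ≥0∞) (A : Condenser X m p) (a : Fin (m + p) → ℝ)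
    (g : X → ℝ) (C : Fin (m + p) → ℝ) : Prop :=
  ∃ ω, ω ∈ Ghat κ A a g ∧ ConstFor κ A a g ω C

/-- The family of compact condensers `K ≺ A`. -/
def CompactSub (A : Condenser X m p) : Type :=
  {K : Condenser X m p // (∀ i, IsCompact (K.plate i)) ∧ ∀ i, K.plate i ⊆ A.plate i}

instance (A : Condenser X m p) : Preorder (CompactSub A) where
  le K L := ∀ i, K.1.plate i ⊆ L.1.plate i
  le_refl K i := subset_rfl
  le_trans K L M h h' i := (h i).trans (h' i)

/-- A minimizer of the energy over `E(A,b,g)` (the class `S(A,b,g)`). -/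
def IsMinimizer (κ : X → X → ℝ≥0∞) (A : Condenser X m p) (b : Fin (m + p) → ℝ≥0∞)
    (g : X → ℝ) (lam : Fin (m + p) → Measure X) : Prop :=
  inEAb κ A b g lam ∧ ∀ μ, inEAb κ A b g μ → assocNormSq κ m p lam ≤ assocNormSq κ m p μ

/-- The interior capacitary distributions `D(A,a,g)` associated with `A`:
simultaneous `A`-vague and strong limits of nets of minimizers
`λ_{K_s} ∈ S(K_s, a·cap(K_s,a,g), g)` along subnets `(K_s)` of the increasing family
of all compact condensers `K ≺ A`. -/
def Dset (κ : X → X → ℝ≥0∞) (A : Condenser X m p) (a : Fin (m + p) → ℝ)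
    (g : X → ℝ) : Set (Fin (m + p) → Measure X) :=
  {γ | inEA κ A.cl γ ∧
    ∃ (n : Net (CompactSub A)) (lam : n.ι → (Fin (m + p) → Measure X)),
      Tendsto n.toFun n.atTopF Filter.atTop ∧
      (∀ t, IsMinimizer κ (n.toFun t).1 (aCap κ (n.toFun t).1 a g) g (lam t)) ∧
      AVagueTendstoF n.atTopF lam γ ∧ StrongTendstoF κ m p n.atTopF lam γ}

/-- The standing assumptions of Section 4.6. -/
def StandingAssumptions (κ : X → X → ℝ≥0∞) (A : Condenser X m p)
    (a : Fin (m + p) → ℝ) (g : X → ℝ) : Prop :=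
  IsKernel κ ∧ PositiveDefinite κ ∧ Consistent κ ∧
  Continuous g ∧ (∀ x, 0 < g x) ∧ (∀ i, 0 < a i) ∧
  0 < cap κ A a g ∧
  (p = 0 ∨ ((∃ c : ℝ, 0 < c ∧ ∀ x ∈ A.unionAll, c ≤ g x) ∧
    ∃ M : ℝ≥0∞, M ≠ ⊤ ∧ ∀ x ∈ A.posUnion, ∀ y ∈ A.negUnion, κ x y ≤ M))

/-- The class of `ν ∈ E` with `α_i a_i κ(x,ν) ≥ C_i g(x)` n.e. in `A_i` for all `i`. -/
def PotIneqClass (κ : X → X → ℝ≥0∞) (A : Condenser X m p) (a : Fin (m + p) → ℝ)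
    (g : X → ℝ) (C : Fin (m + p) → ℝ) : Set (Measure X × Measure X) :=
  {ν | inE κ ν ∧ ∀ i, NearlyEverywhereOn κ
    (fun x => ((C i * g x : ℝ) : EReal) ≤ ((sgn m i * a i : ℝ) : EReal) * pot κ ν x)
    (A.plate i)}

/-- The class of `μ ∈ E(Ā)` with `α_i a_i κ(x,μ) ≥ C_i g(x)` n.e. in `A_i` for all `i`. -/
def PotIneqClassA (κ : X → X → ℝ≥0∞) (A : Condenser X m p) (a : Fin (m + p) → ℝ)
    (g : X → ℝ) (C : Fin (m + p) → ℝ) : Set (Fin (m + p) → Measure X) :=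
  {μ | inEA κ A.cl μ ∧ ∀ i, NearlyEverywhereOn κ
    (fun x => ((C i * g x : ℝ) : EReal) ≤ ((sgn m i * a i : ℝ) : EReal) * pot κ (Rpair m p μ) x)
    (A.plate i)}

/-- The quotient `α_i a_i κ(x,ν) / g(x)`, as an extended real. -/
def potQuot (κ : X → X → ℝ≥0∞) (m : ℕ) {k : ℕ} (a : Fin k → ℝ) (g : X → ℝ)
    (ν : Measure X × Measure X) (i : Fin k) (x : X) : EReal :=
  (((g x)⁻¹ : ℝ) : EReal) * (((sgn m i * a i : ℝ) : EReal) * pot κ ν x)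

end Zorii

section Helpers
set_option linter.unusedSectionVars false
open Zorii MeasureTheory Set

variable {X : Type} [TopologicalSpace X] [MeasurableSpace X]
variable {κ : X → X → ℝ≥0∞}

lemma mutualE_def (κ : X → X → ℝ≥0∞) (μ ν : Measure X) :
    mutualE κ μ ν = ∫⁻ x, potOf κ ν x ∂μ := rfl

lemma potOf_mono (κ : X → X → ℝ≥0∞) {ν ν' : Measure X} (h : ν ≤ ν') :
    potOf κ ν ≤ potOf κ ν' := fun _x => lintegral_mono' h le_rfl

lemma mutualE_mono {μ μ' ν ν' : Measure X} (hμ : μ ≤ μ') (hν : ν ≤ ν') :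
    mutualE κ μ ν ≤ mutualE κ μ' ν' :=
  lintegral_mono' hμ (potOf_mono κ hν)

lemma mutualE_add_left (κ : X → X → ℝ≥0∞) (μ₁ μ₂ ν : Measure X) :
    mutualE κ (μ₁ + μ₂) ν = mutualE κ μ₁ ν + mutualE κ μ₂ ν :=
  lintegral_add_measure _ _ _

lemma mutualE_sum_left (κ : X → X → ℝ≥0∞) {ι : Type} (s : Finset ι) (μ : ι → Measure X)
    (ν : Measure X) : mutualE κ (∑ i ∈ s, μ i) ν = ∑ i ∈ s, mutualE κ (μ i) ν :=
  lintegral_finset_sum_measure s _ _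

lemma potOf_add (κ : X → X → ℝ≥0∞) (ν₁ ν₂ : Measure X) :
    potOf κ (ν₁ + ν₂) = fun x => potOf κ ν₁ x + potOf κ ν₂ x := by
  funext x; exact lintegral_add_measure _ _ _

lemma mutualE_add_right (μ ν₁ ν₂ : Measure X) (h : Measurable (potOf κ ν₁)) :
    mutualE κ μ (ν₁ + ν₂) = mutualE κ μ ν₁ + mutualE κ μ ν₂ := by
  rw [mutualE_def, potOf_add, mutualE_def, mutualE_def, ← lintegral_add_left h]

lemma mutualE_smul_left (κ : X → X → ℝ≥0∞) (c : ℝ≥0∞) (μ ν : Measure X) :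
    mutualE κ (c • μ) ν = c * mutualE κ μ ν := lintegral_smul_measure _ _

lemma potOf_smul (κ : X → X → ℝ≥0∞) (c : ℝ≥0∞) (ν : Measure X) :
    potOf κ (c • ν) = fun x => c * potOf κ ν x := by
  funext x; exact lintegral_smul_measure _ _

lemma mutualE_smul_right (κ : X → X → ℝ≥0∞) {c : ℝ≥0∞} (hc : c ≠ ⊤) (μ ν : Measure X) :
    mutualE κ μ (c • ν) = c * mutualE κ μ ν := by
  rw [mutualE_def, mutualE_def, ← lintegral_const_mul' c _ hc]
  exact lintegral_congr fun x => congrFun (potOf_smul κ c ν) x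

lemma innerRegular_zero : (0 : Measure X).InnerRegular :=
  ⟨fun _U _hU r hr => absurd hr (by simp)⟩

lemma measure_eq_iSup_compact {μ : Measure X} (h : μ.InnerRegular) {U : Set X}
    (hU : MeasurableSet U) :
    μ U = ⨆ K : {K : Set X // K ⊆ U ∧ IsCompact K}, μ K.1 := by
  refine le_antisymm (le_of_forall_lt fun r hr => ?_) (iSup_le fun K => measure_mono K.2.1)
  obtain ⟨K, hKU, hKc, hK⟩ := h.innerRegular hU r hr
  exact lt_of_lt_of_le hK
    (le_iSup (fun K : {K : Set X // K ⊆ U ∧ IsCompact K} => μ K.1) ⟨K, hKU, hKc⟩)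

lemma innerRegular_of_iSup {μ : Measure X}
    (h : ∀ U, MeasurableSet U → μ U = ⨆ K : {K : Set X // K ⊆ U ∧ IsCompact K}, μ K.1) :
    μ.InnerRegular := by
  constructor
  intro U hU r hr
  rw [h U hU, lt_iSup_iff] at hr
  obtain ⟨⟨K, hKU, hKc⟩, hK⟩ := hr
  exact ⟨K, hKU, hKc, hK⟩

lemma innerRegular_restrict {μ : Measure X} (h : μ.InnerRegular) {S : Set X}
    (hS : MeasurableSet S) : (μ.restrict S).InnerRegular := by
  constructor
  intro U hU r hr
  rw [Measure.restrict_apply hU] at hr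
  obtain ⟨K, hKU, hKc, hK⟩ := h.innerRegular (hU.inter hS) r hr
  refine ⟨K, hKU.trans inter_subset_left, hKc, ?_⟩
  rw [Measure.restrict_apply' hS, inter_eq_self_of_subset_left (hKU.trans inter_subset_right)]
  exact hK

lemma innerRegular_add {μ ν : Measure X} (hμ : μ.InnerRegular) (hν : ν.InnerRegular) :
    (μ + ν).InnerRegular := by
  refine innerRegular_of_iSup fun U hU => ?_
  have hne : Nonempty {K : Set X // K ⊆ U ∧ IsCompact K} :=
    ⟨⟨∅, empty_subset _, isCompact_empty⟩⟩
  simp only [Measure.add_apply]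
  rw [measure_eq_iSup_compact hμ hU, measure_eq_iSup_compact hν hU, ENNReal.iSup_add_iSup]
  intro i j
  refine ⟨⟨i.1 ∪ j.1, union_subset i.2.1 j.2.1, i.2.2.union j.2.2⟩, ?_⟩
  exact add_le_add (measure_mono subset_union_left) (measure_mono subset_union_right)

lemma innerRegular_smul {μ : Measure X} (h : μ.InnerRegular) (c : ℝ≥0∞) :
    (c • μ).InnerRegular := by
  refine innerRegular_of_iSup fun U hU => ?_
  simp only [Measure.smul_apply, smul_eq_mul]
  rw [measure_eq_iSup_compact h hU, ENNReal.mul_iSup]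

lemma innerRegular_finsum {ι : Type} {s : Finset ι} {μ : ι → Measure X}
    (h : ∀ i ∈ s, (μ i).InnerRegular) : (∑ i ∈ s, μ i).InnerRegular := by
  induction s using Finset.cons_induction with
  | empty => simpa using innerRegular_zero
  | cons i s his ih =>
      rw [Finset.sum_cons]
      exact innerRegular_add (h i (Finset.mem_cons_self _ _))
        (ih fun j hj => h j (Finset.mem_cons_of_mem hj))

lemma fmc_zero : IsFiniteMeasureOnCompacts (0 : Measure X) := ⟨fun _K _h => by simp⟩

lemma fmc_add {μ ν : Measure X} (hμ : IsFiniteMeasureOnCompacts μ)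
    (hν : IsFiniteMeasureOnCompacts ν) : IsFiniteMeasureOnCompacts (μ + ν) :=
  ⟨fun _K hK => by
    rw [Measure.add_apply]
    exact ENNReal.add_lt_top.mpr ⟨hμ.lt_top_of_isCompact hK, hν.lt_top_of_isCompact hK⟩⟩

lemma fmc_restrict {μ : Measure X} (hμ : IsFiniteMeasureOnCompacts μ) (S : Set X) :
    IsFiniteMeasureOnCompacts (μ.restrict S) :=
  ⟨fun K hK => lt_of_le_of_lt (Measure.restrict_le_self K) (hμ.lt_top_of_isCompact hK)⟩

lemma fmc_smul {μ : Measure X} (hμ : IsFiniteMeasureOnCompacts μ) {c : ℝ≥0∞} (hc : c ≠ ⊤) :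
    IsFiniteMeasureOnCompacts (c • μ) :=
  ⟨fun _K hK => by
    rw [Measure.smul_apply, smul_eq_mul]
    exact ENNReal.mul_lt_top hc.lt_top (hμ.lt_top_of_isCompact hK)⟩

lemma fmc_finsum {ι : Type} {s : Finset ι} {μ : ι → Measure X}
    (h : ∀ i ∈ s, IsFiniteMeasureOnCompacts (μ i)) : IsFiniteMeasureOnCompacts (∑ i ∈ s, μ i) := by
  induction s using Finset.cons_induction with
  | empty => simpa using fmc_zero
  | cons i s his ih =>
      rw [Finset.sum_cons]
      exact fmc_add (h i (Finset.mem_cons_self _ _)) (ih fun j hj => h j (Finset.mem_cons_of_mem hj))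

lemma isRadon_zero : IsRadon (0 : Measure X) := ⟨innerRegular_zero, fmc_zero⟩

lemma isRadon_add {μ ν : Measure X} (hμ : IsRadon μ) (hν : IsRadon ν) : IsRadon (μ + ν) :=
  ⟨innerRegular_add hμ.1 hν.1, fmc_add hμ.2 hν.2⟩

lemma isRadon_restrict {μ : Measure X} (hμ : IsRadon μ) {S : Set X} (hS : MeasurableSet S) :
    IsRadon (μ.restrict S) :=
  ⟨innerRegular_restrict hμ.1 hS, fmc_restrict hμ.2 S⟩

lemma isRadon_smul {μ : Measure X} (hμ : IsRadon μ) {c : ℝ≥0∞} (hc : c ≠ ⊤) :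
    IsRadon (c • μ) :=
  ⟨innerRegular_smul hμ.1 c, fmc_smul hμ.2 hc⟩

lemma isRadon_finsum {ι : Type} {s : Finset ι} {μ : ι → Measure X}
    (h : ∀ i ∈ s, IsRadon (μ i)) : IsRadon (∑ i ∈ s, μ i) :=
  ⟨innerRegular_finsum fun i hi => (h i hi).1, fmc_finsum fun i hi => (h i hi).2⟩

lemma le_sum_of_mem {ι : Type} {s : Finset ι} {μ : ι → Measure X} {i : ι} (hi : i ∈ s) :
    μ i ≤ ∑ j ∈ s, μ j := by
  rw [Measure.le_iff]
  intro t _ht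
  rw [Measure.finset_sum_apply]
  exact Finset.single_le_sum (f := fun j => μ j t) (fun j _ => zero_le) hi

lemma le_smul_of_one_le {μ : Measure X} {c : ℝ≥0∞} (hc : 1 ≤ c) : μ ≤ c • μ := by
  rw [Measure.le_iff]
  intro t _ht
  rw [Measure.smul_apply, smul_eq_mul]
  exact le_mul_of_one_le_left (zero_le) hc

lemma smul_mono_measure {μ ν : Measure X} (h : μ ≤ ν) {c d : ℝ≥0∞} (hcd : c ≤ d) :
    c • μ ≤ d • ν := by
  rw [Measure.le_iff]
  intro t ht
  simp only [Measure.smul_apply, smul_eq_mul]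
  exact mul_le_mul' hcd (Measure.le_iff.mp h t ht)

end Helpers


section Helpers2
set_option linter.unusedSectionVars false
set_option maxHeartbeats 1000000
open Zorii MeasureTheory Set

variable {X : Type} [TopologicalSpace X] [MeasurableSpace X] [T2Space X] [BorelSpace X]
variable {κ : X → X → ℝ≥0∞}

lemma tail_small {μ : Measure X} (hreg : μ.InnerRegular) {S : Set X} (hS : μ Sᶜ = 0)
    {f : X → ℝ≥0∞} (hfin : ∫⁻ x, f x ∂μ ≠ ⊤) {δ : ℝ≥0∞} (hδ : δ ≠ 0) :
    ∃ K : Set X, IsCompact K ∧ K ⊆ S ∧ ∫⁻ x, f x ∂(μ.restrict Kᶜ) ≤ δ := by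
  obtain ⟨f', hf'm, hf'le, hf'eq⟩ := exists_measurable_le_lintegral_eq μ f
  have hf'fin : ∫⁻ x, f' x ∂μ ≠ ⊤ := hf'eq ▸ hfin
  have key : ∀ K : Set X, MeasurableSet K →
      ∫⁻ x, f x ∂(μ.restrict Kᶜ) ≤ ∫⁻ x, f' x ∂(μ.restrict Kᶜ) := by
    intro K hK
    have h1 : ∫⁻ x, f x ∂(μ.restrict K) + ∫⁻ x, f x ∂(μ.restrict Kᶜ) = ∫⁻ x, f x ∂μ := by
      rw [← lintegral_add_measure, Measure.restrict_add_restrict_compl hK]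
    have h2 : ∫⁻ x, f' x ∂(μ.restrict K) + ∫⁻ x, f' x ∂(μ.restrict Kᶜ) = ∫⁻ x, f' x ∂μ := by
      rw [← lintegral_add_measure, Measure.restrict_add_restrict_compl hK]
    have h3 : ∫⁻ x, f' x ∂(μ.restrict K) ≤ ∫⁻ x, f x ∂(μ.restrict K) := lintegral_mono hf'le
    have h4 : ∫⁻ x, f' x ∂(μ.restrict K) ≠ ⊤ := by
      refine ne_top_of_le_ne_top hf'fin ?_
      rw [← h2]; exact le_self_add
    have h5 : ∫⁻ x, f' x ∂(μ.restrict K) + ∫⁻ x, f x ∂(μ.restrict Kᶜ)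
        ≤ ∫⁻ x, f' x ∂(μ.restrict K) + ∫⁻ x, f' x ∂(μ.restrict Kᶜ) := by
      rw [h2, ← hf'eq, ← h1]
      exact add_le_add_left h3 _
    exact (ENNReal.add_le_add_iff_left h4).mp h5
  set w := μ.withDensity f' with hw
  have hwuniv : w univ ≠ ⊤ := by
    rw [hw, withDensity_apply _ MeasurableSet.univ, Measure.restrict_univ]; exact hf'fin
  obtain ⟨N, hSN, hNm, hN0⟩ := exists_measurable_superset_of_null hS
  have hwN : w N = 0 := by
    rw [hw, withDensity_apply _ hNm]; exact setLIntegral_measure_zero _ _ hN0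
  set B : ℕ → Set X := fun n => Nᶜ ∩ f' ⁻¹' (Icc (((n : ℝ≥0∞) + 1)⁻¹) ((n : ℝ≥0∞) + 1)) with hB
  have hBm : ∀ n, MeasurableSet (B n) := fun n => hNm.compl.inter (hf'm measurableSet_Icc)
  have hBmono : Monotone B := by
    intro n n' hnn'
    apply inter_subset_inter_right
    apply preimage_mono
    apply Icc_subset_Icc
    · exact ENNReal.inv_le_inv.mpr (add_le_add_left (by exact_mod_cast hnn') 1)
    · exact add_le_add_left (by exact_mod_cast hnn') 1
  have hcover : w Nᶜ ≤ ⨆ n, w (B n) := by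
    have hT0 : w (f' ⁻¹' {0}) = 0 := by
      rw [hw, withDensity_apply _ (hf'm (measurableSet_singleton 0)),
        setLIntegral_congr_fun (hf'm (measurableSet_singleton 0))
          (fun x hx => hx)]
      simp
    have hμtop : μ (f' ⁻¹' {⊤}) = 0 := by
      by_contra hpos
      apply hf'fin
      have h1 : ∫⁻ x in f' ⁻¹' {⊤}, f' x ∂μ ≤ ∫⁻ x, f' x ∂μ := setLIntegral_le_lintegral _ _
      rw [setLIntegral_congr_fun (hf'm (measurableSet_singleton ⊤))
        (fun x hx => hx), setLIntegral_const] at h1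
      rw [eq_top_iff]
      refine le_trans (le_of_eq ?_) h1
      rw [ENNReal.top_mul hpos]
    have hTtop : w (f' ⁻¹' {⊤}) = 0 := by
      rw [hw, withDensity_apply _ (hf'm (measurableSet_singleton ⊤))]
      exact setLIntegral_measure_zero _ _ hμtop
    have hsub : Nᶜ ⊆ (⋃ n, B n) ∪ (f' ⁻¹' {0} ∪ f' ⁻¹' {⊤}) := by
      intro x hx
      rcases eq_or_ne (f' x) 0 with h0 | h0
      · exact Or.inr (Or.inl h0)
      rcases eq_or_ne (f' x) ⊤ with htop | htop
      · exact Or.inr (Or.inr htop)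
      left
      obtain ⟨n1, hn1⟩ := ENNReal.exists_nat_gt htop
      have hinv : (f' x)⁻¹ ≠ ⊤ := by simpa [ENNReal.inv_eq_top] using h0
      obtain ⟨n2, hn2⟩ := ENNReal.exists_nat_gt hinv
      refine mem_iUnion.mpr ⟨max n1 n2, hx, ?_, ?_⟩
      · rw [← inv_inv (f' x)]
        apply ENNReal.inv_le_inv.mpr
        calc (f' x)⁻¹ ≤ (n2 : ℝ≥0∞) := hn2.le
          _ ≤ ((max n1 n2 : ℕ) : ℝ≥0∞) := by exact_mod_cast le_max_right n1 n2
          _ ≤ ((max n1 n2 : ℕ) : ℝ≥0∞) + 1 := le_self_add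
      · calc f' x ≤ (n1 : ℝ≥0∞) := hn1.le
          _ ≤ ((max n1 n2 : ℕ) : ℝ≥0∞) := by exact_mod_cast le_max_left n1 n2
          _ ≤ ((max n1 n2 : ℕ) : ℝ≥0∞) + 1 := le_self_add
    calc w Nᶜ ≤ w (⋃ n, B n) + (w (f' ⁻¹' {0}) + w (f' ⁻¹' {⊤})) := by
          refine le_trans (measure_mono hsub) ?_
          refine le_trans (measure_union_le _ _) ?_
          exact add_le_add le_rfl (measure_union_le _ _)
      _ = w (⋃ n, B n) := by rw [hT0, hTtop]; simp
      _ = ⨆ n, w (B n) := hBmono.directed_le.measure_iUnion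
  have hNcS : Nᶜ ⊆ S := compl_subset_comm.mp hSN
  rcases le_or_gt (w Nᶜ) (δ / 2) with hsmall | hbig
  · refine ⟨∅, isCompact_empty, empty_subset _, ?_⟩
    rw [compl_empty, Measure.restrict_univ]
    have he : ∫⁻ x, f x ∂μ = w univ := by
      rw [hw, withDensity_apply _ MeasurableSet.univ, Measure.restrict_univ, hf'eq]
    rw [he]
    calc w univ = w (N ∪ Nᶜ) := by rw [union_compl_self]
      _ ≤ w N + w Nᶜ := measure_union_le _ _
      _ ≤ 0 + δ/2 := by rw [hwN]; exact add_le_add le_rfl hsmall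
      _ ≤ δ := by rw [zero_add]; exact ENNReal.half_le_self
  · have hwNc_ne : w Nᶜ ≠ 0 := fun h => absurd hbig (by rw [h]; exact not_lt.mpr (zero_le))
    have hwNc_fin : w Nᶜ ≠ ⊤ := ne_top_of_le_ne_top hwuniv (measure_mono (subset_univ _))
    have hδ2 : δ/2 ≠ 0 := by
      simp only [ne_eq, ENNReal.div_eq_zero_iff, hδ, false_or]
      norm_num
    have hlt : w Nᶜ - δ/2 < ⨆ n, w (B n) :=
      lt_of_lt_of_le (ENNReal.sub_lt_self hwNc_fin hwNc_ne hδ2) hcover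
    rw [lt_iSup_iff] at hlt
    obtain ⟨n, hn⟩ := hlt
    have hBsub : B n ⊆ Nᶜ := inter_subset_left
    have hwBn_fin : w (B n) ≠ ⊤ := ne_top_of_le_ne_top hwNc_fin (measure_mono hBsub)
    have hdiff1 : w (Nᶜ \ B n) ≤ δ / 2 := by
      rw [measure_diff hBsub (hBm n).nullMeasurableSet hwBn_fin]
      refine tsub_le_iff_right.mpr ?_
      have h' : w Nᶜ < w (B n) + δ/2 := ENNReal.lt_add_of_sub_lt_right (Or.inl hwNc_fin) hn
      rw [add_comm] at h'
      exact h'.le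
    have hμBn : μ (B n) ≠ ⊤ := by
      have hlow : ((n:ℝ≥0∞)+1)⁻¹ * μ (B n) ≤ w (B n) := by
        calc ((n:ℝ≥0∞)+1)⁻¹ * μ (B n) = ∫⁻ _x in B n, ((n:ℝ≥0∞)+1)⁻¹ ∂μ :=
              (setLIntegral_const _ _).symm
          _ ≤ ∫⁻ x in B n, f' x ∂μ := setLIntegral_mono hf'm (fun x hx => hx.2.1)
          _ = w (B n) := (withDensity_apply _ (hBm n)).symm
      intro htop
      rw [htop, ENNReal.mul_top (ENNReal.inv_ne_zero.mpr (by simp))] at hlow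
      exact hwBn_fin (top_le_iff.mp hlow)
    have hε : δ/2/((n:ℝ≥0∞)+1) ≠ 0 := by
      simp only [ne_eq, ENNReal.div_eq_zero_iff, hδ2, false_or]
      simp
    obtain ⟨K, hKB, hKc, hK⟩ :=
      hreg.innerRegular.exists_subset_lt_add isCompact_empty (hBm n) hμBn hε
    have hKm : MeasurableSet K := hKc.measurableSet
    have hμK : μ K ≠ ⊤ := ne_top_of_le_ne_top hμBn (measure_mono hKB)
    have hdiff2 : w (B n \ K) ≤ δ / 2 := by
      have hμdiff : μ (B n \ K) ≤ δ/2/((n:ℝ≥0∞)+1) := by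
        rw [measure_diff hKB hKm.nullMeasurableSet hμK]
        exact tsub_le_iff_right.mpr (le_of_lt (by rwa [add_comm] at hK))
      calc w (B n \ K) = ∫⁻ x in B n \ K, f' x ∂μ := withDensity_apply _ ((hBm n).diff hKm)
        _ ≤ ∫⁻ _x in B n \ K, ((n:ℝ≥0∞)+1) ∂μ :=
            setLIntegral_mono measurable_const (fun x hx => hx.1.2.2)
        _ = ((n:ℝ≥0∞)+1) * μ (B n \ K) := setLIntegral_const _ _
        _ ≤ ((n:ℝ≥0∞)+1) * (δ/2/((n:ℝ≥0∞)+1)) := mul_le_mul_right hμdiff _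
        _ ≤ δ / 2 := by
            rw [div_eq_mul_inv, mul_comm (δ/2), ← mul_assoc]
            calc ((n:ℝ≥0∞)+1) * ((n:ℝ≥0∞)+1)⁻¹ * (δ/2) ≤ 1 * (δ/2) := by
                  exact mul_le_mul_left (ENNReal.mul_inv_le_one _) _
              _ = δ/2 := one_mul _
    refine ⟨K, hKc, hKB.trans (hBsub.trans hNcS), ?_⟩
    refine le_trans (key K hKm) ?_
    have hwK : ∫⁻ x, f' x ∂(μ.restrict Kᶜ) = w Kᶜ := (withDensity_apply _ hKm.compl).symm
    rw [hwK]
    have hsub2 : Kᶜ ⊆ N ∪ ((Nᶜ \ B n) ∪ (B n \ K)) := by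
      intro x hx
      by_cases hxN : x ∈ N
      · exact Or.inl hxN
      by_cases hxB : x ∈ B n
      · exact Or.inr (Or.inr ⟨hxB, hx⟩)
      · exact Or.inr (Or.inl ⟨hxN, hxB⟩)
    calc w Kᶜ ≤ w N + (w (Nᶜ \ B n) + w (B n \ K)) :=
          le_trans (measure_mono hsub2)
            (le_trans (measure_union_le _ _) (add_le_add_right (measure_union_le _ _) _))
      _ ≤ 0 + (δ/2 + δ/2) := by rw [hwN]; exact add_le_add le_rfl (add_le_add hdiff1 hdiff2)
      _ = δ := by rw [zero_add, ENNReal.add_halves]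

end Helpers2


section Helpers3
set_option linter.unusedSectionVars false
set_option maxHeartbeats 1000000
open Zorii MeasureTheory Set

variable {X : Type} [TopologicalSpace X] [MeasurableSpace X] [T2Space X] [BorelSpace X]
variable {κ : X → X → ℝ≥0∞}

lemma exists_nnreal_btwn_mul {c L : ℝ≥0∞} (h : c < L) :
    ∃ t : ℝ≥0, 0 < t ∧ t < 1 ∧ c < (t : ℝ≥0∞) * L := by
  rcases eq_or_ne L ⊤ with hL | hL
  · refine ⟨1/2, by rw [← NNReal.coe_lt_coe]; norm_num, by rw [← NNReal.coe_lt_coe]; norm_num, ?_⟩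
    have h2 : (1:ℝ≥0)/2 ≠ 0 := (by positivity : (0:ℝ≥0) < 1/2).ne'
    rw [hL, ENNReal.mul_top (by exact_mod_cast h2)]
    exact hL ▸ h
  · have hc : c ≠ ⊤ := fun hct => absurd h (by rw [hct]; exact not_lt.mpr le_top)
    lift L to ℝ≥0 using hL
    lift c to ℝ≥0 using hc
    rw [ENNReal.coe_lt_coe] at h
    have hR : (c : ℝ) < (L : ℝ) := h
    have hL0 : (0:ℝ) < (L:ℝ) := lt_of_le_of_lt c.coe_nonneg hR
    set tR : ℝ := ((c:ℝ) + L) / (2 * L) with htR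
    have ht0 : 0 < tR := by positivity
    have ht1 : tR < 1 := by rw [htR, div_lt_one (by positivity)]; linarith
    have htc : (c:ℝ) < tR * L := by
      have he : tR * L = ((c:ℝ) + L)/2 := by
        rw [htR]; field_simp
      rw [he]; linarith
    refine ⟨(show ℝ≥0 from ⟨tR, ht0.le⟩), ?_, ?_, ?_⟩
    · exact ht0
    · rw [← NNReal.coe_lt_coe]; exact ht1
    · rw [← ENNReal.coe_mul, ENNReal.coe_lt_coe, ← NNReal.coe_lt_coe, NNReal.coe_mul]
      exact htc

lemma exists_compacts_sum_lt {ν : Measure X} (hreg : ν.InnerRegular)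
    (F : Finset ℝ≥0) (B : ℝ≥0 → Set X) (hB : ∀ r ∈ F, MeasurableSet (B r))
    {c : ℝ≥0∞} (hc : c < ∑ r ∈ F, (r : ℝ≥0∞) * ν (B r)) :
    ∃ Q : ℝ≥0 → Set X, (∀ r ∈ F, IsCompact (Q r) ∧ Q r ⊆ B r) ∧
      c < ∑ r ∈ F, (r : ℝ≥0∞) * ν (Q r) := by
  rcases eq_or_ne (∑ r ∈ F, (r : ℝ≥0∞) * ν (B r)) ⊤ with hS | hS
  · have hctop : c ≠ ⊤ := (hc.trans_le hS.le).ne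
    obtain ⟨r, hrF, hr⟩ := ENNReal.sum_eq_top.mp hS
    have hr0 : r ≠ 0 := by rintro rfl; simp at hr
    have hν : ν (B r) = ⊤ := by
      by_contra h'
      exact (ENNReal.mul_lt_top ENNReal.coe_lt_top (lt_top_iff_ne_top.mpr h')).ne hr
    have hc' : c / (r : ℝ≥0∞) < ν (B r) := by
      rw [hν]
      exact ENNReal.div_lt_top hctop (by exact_mod_cast hr0)
    obtain ⟨Q, hQB, hQc, hQ⟩ := hreg.innerRegular (hB r hrF) _ hc'
    refine ⟨fun s => if s = r then Q else ∅, ?_, ?_⟩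
    · intro s hsF
      by_cases hs : s = r
      · subst hs; simp only [if_pos rfl]; exact ⟨hQc, hQB⟩
      · simp only [if_neg hs]; exact ⟨isCompact_empty, empty_subset _⟩
    · have hterm : c < (r : ℝ≥0∞) * ν Q := by
        have h2 := (ENNReal.div_lt_iff (Or.inl (by exact_mod_cast hr0))
          (Or.inl ENNReal.coe_ne_top)).mp hQ
        rwa [mul_comm] at h2
      refine lt_of_lt_of_le hterm ?_
      calc (r : ℝ≥0∞) * ν Q = (r : ℝ≥0∞) * ν (if r = r then Q else ∅) := by rw [if_pos rfl]
        _ ≤ ∑ s ∈ F, (s : ℝ≥0∞) * ν (if s = r then Q else ∅) :=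
            Finset.single_le_sum (f := fun (s : ℝ≥0) => (s : ℝ≥0∞) * ν (if s = r then Q else ∅))
              (fun _ _ => zero_le) hrF
  · set S := ∑ r ∈ F, (r : ℝ≥0∞) * ν (B r) with hSdef
    have hfin : ∀ r ∈ F, (r:ℝ≥0∞) * ν (B r) ≠ ⊤ := by
      intro r hr
      exact ne_top_of_le_ne_top hS
        (Finset.single_le_sum (f := fun (r : ℝ≥0) => (r:ℝ≥0∞) * ν (B r)) (fun _ _ => zero_le) hr)
    set Δ := S - c with hΔdef
    have hΔ0 : Δ ≠ 0 := by
      rw [hΔdef]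
      exact (tsub_pos_of_lt hc).ne'
    have hΔtop : Δ ≠ ⊤ := by
      rw [hΔdef]
      exact ne_top_of_le_ne_top hS tsub_le_self
    set e := Δ / ((F.card : ℝ≥0∞) + 1) with hedef
    have he0 : e ≠ 0 := by
      rw [hedef]
      simp only [ne_eq, ENNReal.div_eq_zero_iff, hΔ0, false_or]
      simp
    have hetop : e ≠ ⊤ := by
      rw [hedef]
      exact (ENNReal.div_lt_top hΔtop (by simp)).ne
    have hchoose : ∀ r ∈ F, ∃ Q : Set X, IsCompact Q ∧ Q ⊆ B r ∧
        (r:ℝ≥0∞) * ν (B r) ≤ (r:ℝ≥0∞) * ν Q + e := by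
      intro r hr
      rcases eq_or_ne r 0 with rfl | hr0
      · exact ⟨∅, isCompact_empty, empty_subset _, by simp⟩
      have hνB : ν (B r) ≠ ⊤ := by
        intro h'
        exact hfin r hr (by rw [h', ENNReal.mul_top (by exact_mod_cast hr0)])
      have hεr : e / (r : ℝ≥0∞) ≠ 0 := by
        simp only [ne_eq, ENNReal.div_eq_zero_iff, he0, false_or]
        exact ENNReal.coe_ne_top
      obtain ⟨Q, hQB, hQc, hQ⟩ :=
        hreg.innerRegular.exists_subset_lt_add isCompact_empty (hB r hr) hνB hεr
      refine ⟨Q, hQc, hQB, ?_⟩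
      calc (r:ℝ≥0∞) * ν (B r) ≤ (r:ℝ≥0∞) * (ν Q + e / r) := mul_le_mul_right hQ.le _
        _ = (r:ℝ≥0∞) * ν Q + (r:ℝ≥0∞) * (e / r) := mul_add _ _ _
        _ ≤ (r:ℝ≥0∞) * ν Q + e := add_le_add_right ENNReal.mul_div_le _
    choose! Q hQc hQB hQ using hchoose
    refine ⟨Q, fun r hr => ⟨hQc r hr, hQB r hr⟩, ?_⟩
    have hsum : S ≤ (∑ r ∈ F, (r:ℝ≥0∞) * ν (Q r)) + (F.card : ℝ≥0∞) * e := by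
      calc S = ∑ r ∈ F, (r:ℝ≥0∞) * ν (B r) := rfl
        _ ≤ ∑ r ∈ F, ((r:ℝ≥0∞) * ν (Q r) + e) := Finset.sum_le_sum hQ
        _ = (∑ r ∈ F, (r:ℝ≥0∞) * ν (Q r)) + (F.card : ℝ≥0∞) * e := by
            rw [Finset.sum_add_distrib, Finset.sum_const, nsmul_eq_mul]
    have hlt : (F.card : ℝ≥0∞) * e < Δ := by
      have h1 : ((F.card : ℝ≥0∞) + 1) * e = Δ := by
        rw [hedef]
        exact ENNReal.mul_div_cancel' (by simp) (by simp)
      rw [← h1]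
      exact ENNReal.mul_lt_mul_left he0 hetop (ENNReal.lt_add_right (ENNReal.natCast_ne_top _) one_ne_zero)
    have hcS : c + Δ = S := by
      rw [hΔdef]
      exact add_tsub_cancel_of_le hc.le
    by_contra hcon
    push_neg at hcon
    have : S ≤ c + (F.card : ℝ≥0∞) * e := by
      refine hsum.trans (add_le_add hcon le_rfl)
    rw [← hcS] at this
    have := (ENNReal.add_le_add_iff_left (by
      exact (hc.trans_le le_top).ne : c ≠ ⊤)).mp this
    exact absurd this (not_le.mpr hlt)

lemma lsc_potOf (hker : IsKernel κ) {ν : Measure X} (hreg : ν.InnerRegular) :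
    LowerSemicontinuous (potOf κ ν) := by
  intro x₀ c hc
  have hc' := hc
  rw [show potOf κ ν x₀ = ∫⁻ y, κ x₀ y ∂ν from rfl,
    lintegral_eq_nnreal (fun y => κ x₀ y) ν, gt_iff_lt, lt_iSup_iff] at hc'
  obtain ⟨φ, hc'⟩ := hc'
  rw [lt_iSup_iff] at hc'
  obtain ⟨hφle, hc'⟩ := hc'
  rw [SimpleFunc.map_lintegral] at hc'
  set F := φ.range.filter (fun r => r ≠ 0) with hF
  have hsum : ∑ r ∈ φ.range, (r:ℝ≥0∞) * ν (φ ⁻¹' {r}) = ∑ r ∈ F, (r:ℝ≥0∞) * ν (φ ⁻¹' {r}) := by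
    refine (Finset.sum_filter_of_ne ?_).symm
    intro r _ hne
    rintro rfl
    simp at hne
  rw [hsum] at hc'
  obtain ⟨t, ht0, ht1, htc⟩ := exists_nnreal_btwn_mul hc'
  have ht0' : (t : ℝ≥0∞) ≠ 0 := by exact_mod_cast ht0.ne'
  have httop : (t : ℝ≥0∞) ≠ ⊤ := ENNReal.coe_ne_top
  have hc2 : c / (t : ℝ≥0∞) < ∑ r ∈ F, (r:ℝ≥0∞) * ν (φ ⁻¹' {r}) := by
    rw [ENNReal.div_lt_iff (Or.inl ht0') (Or.inl httop)]
    rwa [mul_comm]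
  obtain ⟨Q, hQ, hcQ⟩ := exists_compacts_sum_lt hreg F _
    (fun r _ => φ.measurableSet_fiber r) hc2
  have htube : ∀ r ∈ F, ∃ U : Set X, IsOpen U ∧ x₀ ∈ U ∧
      ∀ x ∈ U, ∀ y ∈ Q r, (t:ℝ≥0∞) * r < κ x y := by
    intro r hr
    have hr0 : r ≠ 0 := (Finset.mem_filter.mp hr).2
    have hopen : IsOpen {z : X × X | (t:ℝ≥0∞) * r < Function.uncurry κ z} :=
      hker.isOpen_preimage ((t:ℝ≥0∞) * r)
    have hsub : ({x₀} ×ˢ Q r : Set (X × X)) ⊆ {z | (t:ℝ≥0∞)*r < Function.uncurry κ z} := by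
      rintro ⟨x, y⟩ ⟨hx, hy⟩
      simp only [mem_singleton_iff] at hx
      show (t:ℝ≥0∞) * r < Function.uncurry κ (x, y)
      have hy' : φ y = r := (hQ r hr).2 hy
      have hle : (r : ℝ≥0∞) ≤ Function.uncurry κ (x, y) := by
        show (r : ℝ≥0∞) ≤ κ x y
        rw [hx]
        have h3 := hφle y
        rwa [hy'] at h3
      refine lt_of_lt_of_le ?_ hle
      calc (t:ℝ≥0∞) * r < 1 * r := by
            refine ENNReal.mul_lt_mul_left (by exact_mod_cast hr0) ENNReal.coe_ne_top ?_
            exact_mod_cast ht1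
        _ = (r : ℝ≥0∞) := one_mul _
    obtain ⟨u, v, hu, _hv, hxu, hQv, huv⟩ :=
      generalized_tube_lemma isCompact_singleton (hQ r hr).1 hopen hsub
    exact ⟨u, hu, hxu rfl, fun x hx y hy => huv (Set.mk_mem_prod hx (hQv hy))⟩
  choose! U hUo hUx hUlt using htube
  have hUopen : IsOpen (⋂ r ∈ F, U r) := isOpen_biInter_finset (fun r hr => hUo r hr)
  have hUmem : (⋂ r ∈ F, U r) ∈ nhds x₀ :=
    hUopen.mem_nhds (mem_biInter (fun r hr => hUx r hr))
  refine Filter.eventually_of_mem hUmem ?_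
  intro x hx
  have hψ : ∀ y, (∑ r ∈ F, (Q r).indicator (fun _ => (t:ℝ≥0∞) * r) y) ≤ κ x y := by
    intro y
    by_cases hy : ∃ r ∈ F, y ∈ Q r
    · obtain ⟨r₀, hr₀F, hyr₀⟩ := hy
      have hzero : ∀ r ∈ F, r ≠ r₀ → (Q r).indicator (fun _ => (t:ℝ≥0∞)*r) y = 0 := by
        intro r hrF hne
        refine indicator_of_notMem ?_ _
        intro hyr
        have h1 : φ y = r := (hQ r hrF).2 hyr
        have h2 : φ y = r₀ := (hQ r₀ hr₀F).2 hyr₀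
        exact hne (h1 ▸ h2)
      rw [Finset.sum_eq_single r₀ hzero (fun h => absurd hr₀F h)]
      rw [indicator_of_mem hyr₀]
      exact (hUlt r₀ hr₀F x (mem_iInter₂.mp hx r₀ hr₀F) y hyr₀).le
    · push_neg at hy
      rw [Finset.sum_eq_zero (fun r hr => indicator_of_notMem (hy r hr) _)]
      exact zero_le
  have hpot : ∑ r ∈ F, (t:ℝ≥0∞) * r * ν (Q r) ≤ potOf κ ν x := by
    have hmeas : ∀ r ∈ F, Measurable ((Q r).indicator (fun _ => (t:ℝ≥0∞) * r)) := by
      intro r hr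
      exact measurable_const.indicator (hQ r hr).1.measurableSet
    calc ∑ r ∈ F, (t:ℝ≥0∞)*r*ν (Q r)
        = ∑ r ∈ F, ∫⁻ y, (Q r).indicator (fun _ => (t:ℝ≥0∞) * r) y ∂ν := by
          refine Finset.sum_congr rfl fun r hr => ?_
          rw [lintegral_indicator_const (hQ r hr).1.measurableSet]
      _ = ∫⁻ y, ∑ r ∈ F, (Q r).indicator (fun _ => (t:ℝ≥0∞) * r) y ∂ν :=
          (lintegral_finset_sum F hmeas).symm
      _ ≤ ∫⁻ y, κ x y ∂ν := lintegral_mono hψ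
  have hlast : c < ∑ r ∈ F, (t:ℝ≥0∞) * r * ν (Q r) := by
    have h1 : c = (t:ℝ≥0∞) * (c / (t:ℝ≥0∞)) := (ENNReal.mul_div_cancel ht0' httop).symm
    rw [h1]
    calc (t:ℝ≥0∞) * (c / (t:ℝ≥0∞)) < (t:ℝ≥0∞) * ∑ r ∈ F, (r:ℝ≥0∞) * ν (Q r) :=
          ENNReal.mul_lt_mul_right ht0' httop hcQ
      _ = ∑ r ∈ F, (t:ℝ≥0∞) * r * ν (Q r) := by
          rw [Finset.mul_sum]
          exact Finset.sum_congr rfl fun r _ => by ring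
  exact hlast.trans_le hpot

lemma potOf_measurable (hker : IsKernel κ) {ν : Measure X} (hreg : ν.InnerRegular) :
    Measurable (potOf κ ν) := (lsc_potOf hker hreg).measurable

end Helpers3


section Helpers4
set_option linter.unusedSectionVars false
set_option maxHeartbeats 1000000
open Zorii MeasureTheory Set

variable {X : Type} [TopologicalSpace X] [MeasurableSpace X]
variable {κ : X → X → ℝ≥0∞}

lemma cs_aux {B E1 E2 : ℝ} (hB : 0 ≤ B) (hE1 : 0 ≤ E1) (hE2 : 0 ≤ E2)
    (h : ∀ s : ℝ, 0 ≤ s → s * B ≤ s^2 * E1 + E2) : B ≤ 2 * Real.sqrt (E1 * E2) := by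
  rcases eq_or_lt_of_le hE1 with hE1' | hE1'
  · have hB0 : B = 0 := by
      by_contra hB'
      have hBpos : 0 < B := lt_of_le_of_ne hB (Ne.symm hB')
      have h1 := h ((E2 + 1)/B) (by positivity)
      rw [← hE1'] at h1
      have h2 : (E2 + 1)/B * B = E2 + 1 := by field_simp
      rw [h2] at h1
      nlinarith
    rw [hB0]; positivity
  · rcases eq_or_lt_of_le hE2 with hE2' | hE2'
    · have hB0 : B = 0 := by
        by_contra hB'
        have hBpos : 0 < B := lt_of_le_of_ne hB (Ne.symm hB')
        have h1 := h (B/(2*E1)) (by positivity)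
        rw [← hE2'] at h1
        have h2 : B/(2*E1) * B = B^2/(2*E1) := by ring
        have h3 : (B/(2*E1))^2 * E1 + 0 = B^2/(4*E1) := by field_simp; ring
        rw [h2, h3] at h1
        have h4 : B^2/(4*E1) < B^2/(2*E1) := by
          apply div_lt_div_of_pos_left (by positivity) (by positivity)
          linarith
        linarith
      rw [hB0]; positivity
    · set u := Real.sqrt E1 with hu'
      set v := Real.sqrt E2 with hv'
      have hu : u^2 = E1 := Real.sq_sqrt hE1'.le
      have hv : v^2 = E2 := Real.sq_sqrt hE2'.le
      have hu0 : 0 < u := Real.sqrt_pos.mpr hE1'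
      have hv0 : 0 < v := Real.sqrt_pos.mpr hE2'
      have hsq : Real.sqrt (E1*E2) = u * v := by
        rw [hu', hv', ← Real.sqrt_mul hE1'.le]
      rw [hsq]
      have key := h (v/u) (by positivity)
      have key2 : (v/u) * B ≤ 2 * v^2 := by
        have h5 : (v/u)^2 * E1 + E2 = 2 * v^2 := by
          rw [div_pow, ← hu, ← hv]; field_simp; ring
        linarith [key, h5 ▸ key]
      have h6 : B = (u/v) * ((v/u)*B) := by field_simp
      rw [h6]
      calc (u/v) * ((v/u)*B) ≤ (u/v) * (2*v^2) := by
            apply mul_le_mul_of_nonneg_left key2 (by positivity)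
        _ = 2*(u*v) := by field_simp
end Helpers4


section Helpers5
set_option linter.unusedSectionVars false
set_option maxHeartbeats 2000000
open Zorii MeasureTheory Set Filter

variable {X : Type} [TopologicalSpace X] [MeasurableSpace X]
variable {κ : X → X → ℝ≥0∞}

lemma sum_le_sum_meas {ι : Type} {s : Finset ι} {f g : ι → Measure X}
    (h : ∀ i ∈ s, f i ≤ g i) : ∑ i ∈ s, f i ≤ ∑ i ∈ s, g i := by
  rw [Measure.le_iff]
  intro u hu
  rw [Measure.finset_sum_apply, Measure.finset_sum_apply]
  exact Finset.sum_le_sum fun i hi => Measure.le_iff.mp (h i hi) u hu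

lemma smul_sum_meas {ι : Type} (s : Finset ι) (c : ℝ≥0∞) (f : ι → Measure X) :
    c • ∑ i ∈ s, f i = ∑ i ∈ s, c • f i := by
  ext u hu
  rw [Measure.smul_apply, Measure.finset_sum_apply, smul_eq_mul, Finset.mul_sum,
    Measure.finset_sum_apply]
  exact Finset.sum_congr rfl fun i _ => by rw [Measure.smul_apply, smul_eq_mul]

lemma cs_energy (hpd : PositiveDefinite κ) {ρ σ : Measure X} (hρ : IsRadon ρ) (hσ : IsRadon σ)
    (h11 : mutualE κ ρ ρ ≠ ⊤) (h22 : mutualE κ σ σ ≠ ⊤)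
    (h12 : mutualE κ ρ σ ≠ ⊤) (h21 : mutualE κ σ ρ ≠ ⊤) :
    (mutualE κ ρ σ).toReal + (mutualE κ σ ρ).toReal ≤
      2 * Real.sqrt ((mutualE κ ρ ρ).toReal * (mutualE κ σ σ).toReal) := by
  have hkey : ∀ s : ℝ, 0 ≤ s → s * ((mutualE κ ρ σ).toReal + (mutualE κ σ ρ).toReal)
      ≤ s^2 * (mutualE κ ρ ρ).toReal + (mutualE κ σ σ).toReal := by
    intro s hs
    set c : ℝ≥0∞ := ENNReal.ofReal s with hcdef
    have hctop : c ≠ ⊤ := ENNReal.ofReal_ne_top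
    have m11 : mutualE κ (c • ρ) (c • ρ) = c * (c * mutualE κ ρ ρ) := by
      rw [mutualE_smul_left, mutualE_smul_right κ hctop]
    have m12 : mutualE κ (c • ρ) σ = c * mutualE κ ρ σ := mutualE_smul_left κ c ρ σ
    have m21 : mutualE κ σ (c • ρ) = c * mutualE κ σ ρ := mutualE_smul_right κ hctop σ ρ
    have hpair : IsRadonPair (c • ρ, σ) := ⟨isRadon_smul hρ hctop, hσ⟩
    have hfe : FinEnergy κ (c • ρ, σ) := by
      refine ⟨?_, ?_, ?_, ?_⟩
      · show mutualE κ (c • ρ) (c • ρ) < ⊤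
        rw [m11]
        exact ENNReal.mul_lt_top hctop.lt_top (ENNReal.mul_lt_top hctop.lt_top h11.lt_top)
      · exact h22.lt_top
      · show mutualE κ (c • ρ) σ < ⊤
        rw [m12]; exact ENNReal.mul_lt_top hctop.lt_top h12.lt_top
      · show mutualE κ σ (c • ρ) < ⊤
        rw [m21]; exact ENNReal.mul_lt_top hctop.lt_top h21.lt_top
    have h0 := hpd.2 _ hpair hfe
    have hns : normSq κ (c • ρ, σ) = (c * (c * mutualE κ ρ ρ) + mutualE κ σ σ).toReal
        - (c * mutualE κ ρ σ + c * mutualE κ σ ρ).toReal := by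
      rw [normSq, eInner]
      dsimp only
      rw [m11, m12, m21]
    rw [hns] at h0
    have hf1 : c * (c * mutualE κ ρ ρ) ≠ ⊤ :=
      (ENNReal.mul_lt_top hctop.lt_top (ENNReal.mul_lt_top hctop.lt_top h11.lt_top)).ne
    have hf2 : c * mutualE κ ρ σ ≠ ⊤ := (ENNReal.mul_lt_top hctop.lt_top h12.lt_top).ne
    have hf3 : c * mutualE κ σ ρ ≠ ⊤ := (ENNReal.mul_lt_top hctop.lt_top h21.lt_top).ne
    rw [ENNReal.toReal_add hf1 h22, ENNReal.toReal_add hf2 hf3,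
      ENNReal.toReal_mul, ENNReal.toReal_mul, ENNReal.toReal_mul, ENNReal.toReal_mul,
      hcdef, ENNReal.toReal_ofReal hs] at h0
    nlinarith [h0]
  exact cs_aux (by positivity) ENNReal.toReal_nonneg ENNReal.toReal_nonneg hkey

lemma meas_le_add_right (μ ν : Measure X) : μ ≤ μ + ν := by
  rw [Measure.le_iff]
  intro s _hs
  rw [Measure.add_apply]
  exact le_self_add

lemma meas_le_add_left (μ ν : Measure X) : ν ≤ μ + ν := by
  rw [Measure.le_iff]
  intro s _hs
  rw [Measure.add_apply]
  exact le_add_self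

end Helpers5


section Main
set_option linter.unusedSectionVars false
set_option maxHeartbeats 4000000
open Zorii MeasureTheory Set Filter

variable {X : Type} [TopologicalSpace X] [MeasurableSpace X] [T2Space X] [BorelSpace X]
variable {κ : X → X → ℝ≥0∞} {m p : ℕ}

lemma minE_le_of_prec {K A' : Condenser X m p} (h : ∀ i, K.plate i ⊆ A'.plate i)
    (b : Fin (m+p) → ℝ≥0∞) (g : X → ℝ) :
    minE κ A' b g ≤ minE κ K b g := by
  refine le_iInf fun ν => le_iInf fun hν => ?_
  have hν' : inEAb κ A' b g ν :=
    ⟨⟨fun i => ⟨(hν.1.1 i).1, measure_mono_null (compl_subset_compl.mpr (h i)) (hν.1.1 i).2⟩,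
      hν.1.2⟩, hν.2⟩
  exact iInf_le_of_le ν (iInf_le_of_le hν' le_rfl)

lemma key_le (hker : IsKernel κ) (hpd : PositiveDefinite κ)
    (A : Condenser X m p)
    {g : X → ℝ} (hgpos : ∀ x, 0 < g x)
    {a : Fin (m + p) → ℝ} (ha : ∀ i, 0 < a i)
    {μ : Fin (m + p) → Measure X} (hμ : inEAb κ A (aVec a) g μ) :
    (⨅ K : CompactSub A, minE κ K.1 (aVec a) g) ≤ ENNReal.ofReal (assocNormSq κ m p μ) := by
  classical
  set sp : Finset (Fin (m+p)) := Finset.univ.filter (fun i => (i:ℕ) < m) with hsp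
  set sn : Finset (Fin (m+p)) := Finset.univ.filter (fun i => ¬ (i:ℕ) < m) with hsn
  set P := Rpos m p μ with hP
  set N := Rneg m p μ with hN
  have hPsum : P = ∑ i ∈ sp, μ i := rfl
  have hNsum : N = ∑ i ∈ sn, μ i := rfl
  have hrad : ∀ i, IsRadon (μ i) := fun i => (hμ.1.1 i).1
  have hconc : ∀ i, μ i (A.plate i)ᶜ = 0 := fun i => (hμ.1.1 i).2
  have hPrad : IsRadon P := isRadon_finsum (fun i _ => hrad i)
  have hNrad : IsRadon N := isRadon_finsum (fun i _ => hrad i)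
  have hfe : FinEnergy κ (Rpair m p μ) := hμ.1.2
  have hgmass : ∀ i, gInt g (μ i) = aVec a i := hμ.2
  have epp_fin : mutualE κ P P ≠ ⊤ := hfe.1.ne
  have enn_fin : mutualE κ N N ≠ ⊤ := hfe.2.1.ne
  have epn_fin : mutualE κ P N ≠ ⊤ := hfe.2.2.1.ne
  have enp_fin : mutualE κ N P ≠ ⊤ := hfe.2.2.2.ne
  have hμleP : ∀ i ∈ sp, μ i ≤ P := fun i hi => hPsum ▸ le_sum_of_mem hi
  have hμleN : ∀ i ∈ sn, μ i ≤ N := fun i hi => hNsum ▸ le_sum_of_mem hi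
  have hμlePN : ∀ i, μ i ≤ P + N := by
    intro i
    by_cases hi : (i:ℕ) < m
    · exact le_trans (hμleP i (by simp [hsp, hi])) (meas_le_add_right _ _)
    · exact le_trans (hμleN i (by simp [hsn]; omega)) (meas_le_add_left _ _)
  have hfinP : ∀ i, ∫⁻ x, potOf κ P x ∂(μ i) ≠ ⊤ := by
    intro i
    refine ne_top_of_le_ne_top ?_ (lintegral_mono' (hμlePN i) le_rfl)
    rw [show ∫⁻ x, potOf κ P x ∂(P + N) = mutualE κ (P+N) P from rfl, mutualE_add_left]
    exact ENNReal.add_ne_top.mpr ⟨epp_fin, enp_fin⟩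
  have hfinN : ∀ i, ∫⁻ x, potOf κ N x ∂(μ i) ≠ ⊤ := by
    intro i
    refine ne_top_of_le_ne_top ?_ (lintegral_mono' (hμlePN i) le_rfl)
    rw [show ∫⁻ x, potOf κ N x ∂(P + N) = mutualE κ (P+N) N from rfl, mutualE_add_left]
    exact ENNReal.add_ne_top.mpr ⟨epn_fin, enn_fin⟩
  have hgfin : ∀ i, ∫⁻ x, ENNReal.ofReal (g x) ∂(μ i) ≠ ⊤ := by
    intro i
    rw [show ∫⁻ x, ENNReal.ofReal (g x) ∂(μ i) = gInt g (μ i) from rfl, hgmass i]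
    exact ENNReal.ofReal_ne_top
  set E1 := (mutualE κ P P).toReal with hE1
  set E2 := (mutualE κ N N).toReal with hE2
  set E3 := (mutualE κ P N).toReal with hE3
  set E4 := (mutualE κ N P).toReal with hE4
  have hE1nn : 0 ≤ E1 := ENNReal.toReal_nonneg
  have hE2nn : 0 ≤ E2 := ENNReal.toReal_nonneg
  set k : ℝ := ((m + p : ℕ) : ℝ) with hk
  have hk0 : 0 ≤ k := by positivity
  set Bfun : ℝ → ℝ := fun t => (1+t)^2*(E1+E2) - E3 - E4 + 2*(k*t)
      + 2*Real.sqrt (E1*(k*t)) + 2*Real.sqrt (E2*(k*t)) with hBfun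
  have hmain : ∀ t : ℝ, 0 < t →
      (⨅ K : CompactSub A, minE κ K.1 (aVec a) g) ≤ ENNReal.ofReal (Bfun t) := by
    intro t ht
    have h1t : (0:ℝ) < 1 + t := by linarith
    have hkt0 : 0 ≤ k * t := by positivity
    set Ct : ℝ≥0∞ := ENNReal.ofReal (1+t) with hCt
    have hCttop : Ct ≠ ⊤ := ENNReal.ofReal_ne_top
    set δ : ℝ≥0∞ := ENNReal.ofReal t with hδ
    have hδ0 : δ ≠ 0 := (ENNReal.ofReal_pos.mpr ht).ne'
    have hchoice : ∀ i : Fin (m+p), ∃ K : Set X, IsCompact K ∧ K.Nonempty ∧ K ⊆ A.plate i ∧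
        (∫⁻ x, potOf κ P x ∂((μ i).restrict Kᶜ) ≤ δ) ∧
        (∫⁻ x, potOf κ N x ∂((μ i).restrict Kᶜ) ≤ δ) ∧
        ENNReal.ofReal (a i / (1+t)) ≤ gInt g ((μ i).restrict K) := by
      intro i
      have hdiffpos : 0 < a i - a i/(1+t) := by
        have h2 : a i / (1+t) < a i := div_lt_self (ha i) (by linarith)
        linarith
      have hδg0 : ENNReal.ofReal (a i - a i/(1+t)) ≠ 0 := (ENNReal.ofReal_pos.mpr hdiffpos).ne'
      obtain ⟨K1, hK1c, hK1s, hK1t⟩ := tail_small (hrad i).1 (hconc i) (hfinP i) hδ0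
      obtain ⟨K2, hK2c, hK2s, hK2t⟩ := tail_small (hrad i).1 (hconc i) (hfinN i) hδ0
      obtain ⟨K3, hK3c, hK3s, hK3t⟩ := tail_small (hrad i).1 (hconc i) (hgfin i) hδg0
      obtain ⟨x0, hx0⟩ := A.plate_nonempty i
      refine ⟨K1 ∪ K2 ∪ K3 ∪ {x0},
        ((hK1c.union hK2c).union hK3c).union isCompact_singleton,
        ⟨x0, by simp⟩, ?_, ?_, ?_, ?_⟩
      · exact union_subset (union_subset (union_subset hK1s hK2s) hK3s) (by simpa using hx0)
      · refine le_trans (lintegral_mono' (Measure.restrict_mono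
          (compl_subset_compl.mpr
            ((subset_union_left.trans subset_union_left).trans subset_union_left)) le_rfl)
          le_rfl) hK1t
      · refine le_trans (lintegral_mono' (Measure.restrict_mono
          (compl_subset_compl.mpr
            ((subset_union_right.trans subset_union_left).trans subset_union_left)) le_rfl)
          le_rfl) hK2t
      · have hKm : MeasurableSet (K1 ∪ K2 ∪ K3 ∪ {x0}) :=
          (((hK1c.union hK2c).union hK3c).union isCompact_singleton).measurableSet
        have hsplit : gInt g ((μ i).restrict (K1 ∪ K2 ∪ K3 ∪ {x0}))
            + gInt g ((μ i).restrict (K1 ∪ K2 ∪ K3 ∪ {x0})ᶜ) = gInt g (μ i) := by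
          rw [gInt, gInt, gInt, ← lintegral_add_measure, Measure.restrict_add_restrict_compl hKm]
        have htail3 : gInt g ((μ i).restrict (K1 ∪ K2 ∪ K3 ∪ {x0})ᶜ)
            ≤ ENNReal.ofReal (a i - a i/(1+t)) := by
          refine le_trans (lintegral_mono' (Measure.restrict_mono
            (compl_subset_compl.mpr (subset_union_right.trans subset_union_left)) le_rfl)
            le_rfl) hK3t
        have htotal : gInt g (μ i) = ENNReal.ofReal (a i) := hgmass i
        have hge : ENNReal.ofReal (a i) ≤ gInt g ((μ i).restrict (K1 ∪ K2 ∪ K3 ∪ {x0}))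
            + ENNReal.ofReal (a i - a i/(1+t)) := by
          rw [← htotal, ← hsplit]
          exact add_le_add le_rfl htail3
        have heq : ENNReal.ofReal (a i / (1+t))
            = ENNReal.ofReal (a i) - ENNReal.ofReal (a i - a i/(1+t)) := by
          rw [← ENNReal.ofReal_sub _ hdiffpos.le]
          congr 1; ring
        rw [heq]
        exact tsub_le_iff_right.mpr hge
    choose K hKc hKne hKsub hKt1 hKt2 hKt3 using hchoice
    have hKm : ∀ i, MeasurableSet (K i) := fun i => (hKc i).measurableSet
    set gK : Fin (m+p) → ℝ≥0∞ := fun i => gInt g ((μ i).restrict (K i)) with hgK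
    have hgK0 : ∀ i, gK i ≠ 0 := by
      intro i h0
      have h1 := hKt3 i
      rw [show gInt g ((μ i).restrict (K i)) = gK i from rfl, h0, le_zero_iff] at h1
      exact (ENNReal.ofReal_pos.mpr (div_pos (ha i) h1t)).ne' h1
    have hgKle : ∀ i, gK i ≤ ENNReal.ofReal (a i) := by
      intro i
      have h1 : gK i ≤ gInt g (μ i) :=
        lintegral_mono' Measure.restrict_le_self le_rfl
      rwa [hgmass i] at h1
    have hgKtop : ∀ i, gK i ≠ ⊤ := fun i => ne_top_of_le_ne_top ENNReal.ofReal_ne_top (hgKle i)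
    set c : Fin (m+p) → ℝ≥0∞ := fun i => ENNReal.ofReal (a i) / gK i with hcdef
    have hc1 : ∀ i, 1 ≤ c i := by
      intro i
      show 1 ≤ ENNReal.ofReal (a i) / gK i
      rw [ENNReal.le_div_iff_mul_le (Or.inl (hgK0 i)) (Or.inl (hgKtop i)), one_mul]
      exact hgKle i
    have hcle : ∀ i, c i ≤ Ct := by
      intro i
      show ENNReal.ofReal (a i) / gK i ≤ Ct
      rw [ENNReal.div_le_iff (hgK0 i) (hgKtop i)]
      calc ENNReal.ofReal (a i) = ENNReal.ofReal ((1+t) * (a i/(1+t))) := by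
            congr 1; field_simp
        _ = Ct * ENNReal.ofReal (a i/(1+t)) := by rw [ENNReal.ofReal_mul (by linarith)]
        _ ≤ Ct * gK i := mul_le_mul_right (hKt3 i) _
    have hctop : ∀ i, c i ≠ ⊤ := fun i => ne_top_of_le_ne_top hCttop (hcle i)
    set ν : Fin (m+p) → Measure X := fun i => c i • (μ i).restrict (K i) with hν
    have hsep : ∀ i j : Fin (m+p), (i:ℕ) < m → ¬ (j:ℕ) < m →
        closure (K i) ∩ closure (K j) = ∅ := by
      intro i j hi hj
      have h1 : closure (K i) ⊆ closure (A.plate i) := closure_mono (hKsub i)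
      have h2 : closure (K j) ⊆ closure (A.plate j) := closure_mono (hKsub j)
      have h3 := A.separated i j hi hj
      exact eq_empty_of_subset_empty (h3 ▸ inter_subset_inter h1 h2)
    set KC : Condenser X m p := ⟨K, hKne, hsep⟩ with hKC
    set KS : CompactSub A := ⟨KC, hKc, hKsub⟩ with hKS
    have hνrad : ∀ i, IsRadon (ν i) :=
      fun i => isRadon_smul (isRadon_restrict (hrad i) (hKm i)) (hctop i)
    have hνconc : ∀ i, ν i (K i)ᶜ = 0 := by
      intro i
      show (c i • (μ i).restrict (K i)) (K i)ᶜ = 0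
      rw [Measure.smul_apply, Measure.restrict_apply (hKm i).compl]
      simp
    have hνg : ∀ i, gInt g (ν i) = aVec a i := by
      intro i
      show gInt g (c i • (μ i).restrict (K i)) = aVec a i
      rw [gInt, lintegral_smul_measure]
      show c i * gK i = aVec a i
      show ENNReal.ofReal (a i) / gK i * gK i = aVec a i
      exact ENNReal.div_mul_cancel (hgK0 i) (hgKtop i)
    set P' : Measure X := ∑ i ∈ sp, (μ i).restrict (K i) with hP'
    set Q' : Measure X := ∑ i ∈ sp, (μ i).restrict (K i)ᶜ with hQ'
    set N' : Measure X := ∑ i ∈ sn, (μ i).restrict (K i) with hN'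
    set R' : Measure X := ∑ i ∈ sn, (μ i).restrict (K i)ᶜ with hR'
    have hPsplit : P = P' + Q' := by
      rw [hPsum, hP', hQ', ← Finset.sum_add_distrib]
      exact Finset.sum_congr rfl fun i _ => (Measure.restrict_add_restrict_compl (hKm i)).symm
    have hNsplit : N = N' + R' := by
      rw [hNsum, hN', hR', ← Finset.sum_add_distrib]
      exact Finset.sum_congr rfl fun i _ => (Measure.restrict_add_restrict_compl (hKm i)).symm
    have hP'rad : IsRadon P' := isRadon_finsum (fun i _ => isRadon_restrict (hrad i) (hKm i))
    have hN'rad : IsRadon N' := isRadon_finsum (fun i _ => isRadon_restrict (hrad i) (hKm i))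
    have hQ'rad : IsRadon Q' :=
      isRadon_finsum (fun i _ => isRadon_restrict (hrad i) (hKm i).compl)
    have hR'rad : IsRadon R' :=
      isRadon_finsum (fun i _ => isRadon_restrict (hrad i) (hKm i).compl)
    have hP'leP : P' ≤ P := hPsplit ▸ meas_le_add_right P' Q'
    have hQ'leP : Q' ≤ P := hPsplit ▸ meas_le_add_left P' Q'
    have hN'leN : N' ≤ N := hNsplit ▸ meas_le_add_right N' R'
    have hR'leN : R' ≤ N := hNsplit ▸ meas_le_add_left N' R'
    have hν_ge : ∀ s : Finset (Fin (m+p)),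
        (∑ i ∈ s, (μ i).restrict (K i)) ≤ ∑ i ∈ s, ν i := by
      intro s
      exact sum_le_sum_meas fun i _ => le_smul_of_one_le (hc1 i)
    have hν_le : ∀ s : Finset (Fin (m+p)), (∑ i ∈ s, ν i) ≤ Ct • ∑ i ∈ s, μ i := by
      intro s
      rw [smul_sum_meas]
      exact sum_le_sum_meas fun i _ =>
        smul_mono_measure Measure.restrict_le_self (hcle i)
    have hPν_le : Rpos m p ν ≤ Ct • P := by
      rw [hPsum]; exact hν_le sp
    have hNν_le : Rneg m p ν ≤ Ct • N := by
      rw [hNsum]; exact hν_le sn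
    have hPν_ge : P' ≤ Rpos m p ν := hν_ge sp
    have hNν_ge : N' ≤ Rneg m p ν := hν_ge sn
    have hsmul2 : ∀ ρ σ : Measure X,
        mutualE κ (Ct • ρ) (Ct • σ) = Ct * (Ct * mutualE κ ρ σ) := by
      intro ρ σ; rw [mutualE_smul_left, mutualE_smul_right κ hCttop]
    have hub : ∀ ρ1 ρ2 σ1 σ2 : Measure X, ρ1 ≤ Ct • σ1 → ρ2 ≤ Ct • σ2 →
        mutualE κ ρ1 ρ2 ≤ Ct * (Ct * mutualE κ σ1 σ2) := by
      intro ρ1 ρ2 σ1 σ2 h1 h2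
      rw [← hsmul2]
      exact mutualE_mono h1 h2
    have hfeν : FinEnergy κ (Rpair m p ν) := by
      have hmt : ∀ e : ℝ≥0∞, e ≠ ⊤ → Ct * (Ct * e) < ⊤ := fun e he =>
        ENNReal.mul_lt_top hCttop.lt_top (ENNReal.mul_lt_top hCttop.lt_top he.lt_top)
      exact ⟨lt_of_le_of_lt (hub _ _ _ _ hPν_le hPν_le) (hmt _ epp_fin),
        lt_of_le_of_lt (hub _ _ _ _ hNν_le hNν_le) (hmt _ enn_fin),
        lt_of_le_of_lt (hub _ _ _ _ hPν_le hNν_le) (hmt _ epn_fin),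
        lt_of_le_of_lt (hub _ _ _ _ hNν_le hPν_le) (hmt _ enp_fin)⟩
    have hinEAb : inEAb κ KC (aVec a) g ν :=
      ⟨⟨fun i => ⟨hνrad i, hνconc i⟩, hfeν⟩, hνg⟩
    have hmeasP' : Measurable (potOf κ P') := potOf_measurable hker hP'rad.1
    have hmeasN' : Measurable (potOf κ N') := potOf_measurable hker hN'rad.1
    have hid1 : mutualE κ P N = mutualE κ P' N' + (mutualE κ P' R' + mutualE κ Q' N) := by
      calc mutualE κ P N = mutualE κ P' N + mutualE κ Q' N := by
            rw [hPsplit, mutualE_add_left]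
        _ = (mutualE κ P' N' + mutualE κ P' R') + mutualE κ Q' N := by
            rw [hNsplit, mutualE_add_right _ _ _ hmeasN']
        _ = mutualE κ P' N' + (mutualE κ P' R' + mutualE κ Q' N) := by
            rw [add_assoc]
    have hid2 : mutualE κ N P = mutualE κ N' P' + (mutualE κ N' Q' + mutualE κ R' P) := by
      calc mutualE κ N P = mutualE κ N' P + mutualE κ R' P := by
            rw [hNsplit, mutualE_add_left]
        _ = (mutualE κ N' P' + mutualE κ N' Q') + mutualE κ R' P := by
            rw [hPsplit, mutualE_add_right _ _ _ hmeasP']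
        _ = mutualE κ N' P' + (mutualE κ N' Q' + mutualE κ R' P) := by
            rw [add_assoc]
    set D : ℝ≥0∞ := ENNReal.ofReal (k * t) with hD
    have hDtop : D ≠ ⊤ := ENNReal.ofReal_ne_top
    have hcard : ∀ s : Finset (Fin (m+p)), ((s.card : ℝ≥0∞)) * δ ≤ D := by
      intro s
      have h1 : (s.card : ℝ≥0∞) ≤ ((m+p : ℕ) : ℝ≥0∞) := by
        refine Nat.cast_le.mpr ?_
        refine le_trans s.card_le_univ (le_of_eq ?_)
        simp
      have h2 : D = ((m+p : ℕ) : ℝ≥0∞) * δ := by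
        rw [hD, hδ, hk, ENNReal.ofReal_mul (by positivity), ENNReal.ofReal_natCast]
      rw [h2]
      exact mul_le_mul_left h1 _
    have htails : ∀ (s : Finset (Fin (m+p))) (σ : Measure X),
        (∀ i ∈ s, ∫⁻ x, potOf κ σ x ∂((μ i).restrict (K i)ᶜ) ≤ δ) →
        mutualE κ (∑ i ∈ s, (μ i).restrict (K i)ᶜ) σ ≤ D := by
      intro s σ hbound
      rw [mutualE_sum_left]
      calc ∑ i ∈ s, mutualE κ ((μ i).restrict (K i)ᶜ) σ ≤ ∑ _i ∈ s, δ :=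
            Finset.sum_le_sum fun i hi => hbound i hi
        _ = (s.card : ℝ≥0∞) * δ := by rw [Finset.sum_const, nsmul_eq_mul]
        _ ≤ D := hcard s
    have hQ'N : mutualE κ Q' N ≤ D := htails sp N (fun i _ => hKt2 i)
    have hR'N : mutualE κ R' N ≤ D := htails sn N (fun i _ => hKt2 i)
    have hQ'P : mutualE κ Q' P ≤ D := htails sp P (fun i _ => hKt1 i)
    have hR'P : mutualE κ R' P ≤ D := htails sn P (fun i _ => hKt1 i)
    have hQ'Q' : mutualE κ Q' Q' ≤ D := le_trans (mutualE_mono le_rfl hQ'leP) hQ'P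
    have hR'R' : mutualE κ R' R' ≤ D := le_trans (mutualE_mono le_rfl hR'leN) hR'N
    have hPR'fin : mutualE κ P R' ≠ ⊤ := ne_top_of_le_ne_top epn_fin (mutualE_mono le_rfl hR'leN)
    have hR'Pfin : mutualE κ R' P ≠ ⊤ := ne_top_of_le_ne_top enp_fin (mutualE_mono hR'leN le_rfl)
    have hNQ'fin : mutualE κ N Q' ≠ ⊤ := ne_top_of_le_ne_top enp_fin (mutualE_mono le_rfl hQ'leP)
    have hQ'Nfin : mutualE κ Q' N ≠ ⊤ := ne_top_of_le_ne_top epn_fin (mutualE_mono hQ'leP le_rfl)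
    have hR'R'fin : mutualE κ R' R' ≠ ⊤ := ne_top_of_le_ne_top hDtop hR'R'
    have hQ'Q'fin : mutualE κ Q' Q' ≠ ⊤ := ne_top_of_le_ne_top hDtop hQ'Q'
    have hsqrt1 : (mutualE κ P R').toReal ≤ 2 * Real.sqrt (E1 * (k*t)) := by
      have hcs := cs_energy hpd hPrad hR'rad epp_fin hR'R'fin hPR'fin hR'Pfin
      refine le_trans (le_add_of_nonneg_right ENNReal.toReal_nonneg) (le_trans hcs ?_)
      have h1 : (mutualE κ R' R').toReal ≤ k*t :=
        ENNReal.toReal_le_of_le_ofReal hkt0 hR'R'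
      refine mul_le_mul_of_nonneg_left ?_ (by norm_num)
      refine Real.sqrt_le_sqrt ?_
      exact mul_le_mul_of_nonneg_left h1 hE1nn
    have hsqrt2 : (mutualE κ N Q').toReal ≤ 2 * Real.sqrt (E2 * (k*t)) := by
      have hcs := cs_energy hpd hNrad hQ'rad enn_fin hQ'Q'fin hNQ'fin hQ'Nfin
      refine le_trans (le_add_of_nonneg_right ENNReal.toReal_nonneg) (le_trans hcs ?_)
      have h1 : (mutualE κ Q' Q').toReal ≤ k*t :=
        ENNReal.toReal_le_of_le_ofReal hkt0 hQ'Q'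
      refine mul_le_mul_of_nonneg_left ?_ (by norm_num)
      refine Real.sqrt_le_sqrt ?_
      exact mul_le_mul_of_nonneg_left h1 hE2nn
    have hP'N'fin : mutualE κ P' N' ≠ ⊤ :=
      ne_top_of_le_ne_top epn_fin (mutualE_mono hP'leP hN'leN)
    have hN'P'fin : mutualE κ N' P' ≠ ⊤ :=
      ne_top_of_le_ne_top enp_fin (mutualE_mono hN'leN hP'leP)
    have hP'R'fin : mutualE κ P' R' ≠ ⊤ :=
      ne_top_of_le_ne_top epn_fin (mutualE_mono hP'leP hR'leN)
    have hN'Q'fin : mutualE κ N' Q' ≠ ⊤ :=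
      ne_top_of_le_ne_top enp_fin (mutualE_mono hN'leN hQ'leP)
    have hre1 : E3 = (mutualE κ P' N').toReal
        + ((mutualE κ P' R').toReal + (mutualE κ Q' N).toReal) := by
      rw [hE3, hid1, ENNReal.toReal_add hP'N'fin (ENNReal.add_ne_top.mpr ⟨hP'R'fin, hQ'Nfin⟩),
        ENNReal.toReal_add hP'R'fin hQ'Nfin]
    have hre2 : E4 = (mutualE κ N' P').toReal
        + ((mutualE κ N' Q').toReal + (mutualE κ R' P).toReal) := by
      rw [hE4, hid2, ENNReal.toReal_add hN'P'fin (ENNReal.add_ne_top.mpr ⟨hN'Q'fin, hR'Pfin⟩),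
        ENNReal.toReal_add hN'Q'fin hR'Pfin]
    have hP'R'le : (mutualE κ P' R').toReal ≤ 2 * Real.sqrt (E1 * (k*t)) := by
      refine le_trans ?_ hsqrt1
      exact ENNReal.toReal_mono hPR'fin (mutualE_mono hP'leP le_rfl)
    have hN'Q'le : (mutualE κ N' Q').toReal ≤ 2 * Real.sqrt (E2 * (k*t)) := by
      refine le_trans ?_ hsqrt2
      exact ENNReal.toReal_mono hNQ'fin (mutualE_mono hN'leN le_rfl)
    have hQ'Nle : (mutualE κ Q' N).toReal ≤ k*t :=
      ENNReal.toReal_le_of_le_ofReal hkt0 hQ'N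
    have hR'Ple : (mutualE κ R' P).toReal ≤ k*t :=
      ENNReal.toReal_le_of_le_ofReal hkt0 hR'P
    have he12ν_fin : mutualE κ (Rpos m p ν) (Rneg m p ν) ≠ ⊤ := hfeν.2.2.1.ne
    have he21ν_fin : mutualE κ (Rneg m p ν) (Rpos m p ν) ≠ ⊤ := hfeν.2.2.2.ne
    have hupper : (mutualE κ (Rpos m p ν) (Rpos m p ν)
        + mutualE κ (Rneg m p ν) (Rneg m p ν)).toReal ≤ (1+t)^2 * (E1 + E2) := by
      have h1 : mutualE κ (Rpos m p ν) (Rpos m p ν) + mutualE κ (Rneg m p ν) (Rneg m p ν)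
          ≤ Ct * (Ct * (mutualE κ P P + mutualE κ N N)) := by
        rw [mul_add, mul_add]
        exact add_le_add (hub _ _ _ _ hPν_le hPν_le) (hub _ _ _ _ hNν_le hNν_le)
      have h2 : Ct * (Ct * (mutualE κ P P + mutualE κ N N)) ≠ ⊤ :=
        (ENNReal.mul_lt_top hCttop.lt_top (ENNReal.mul_lt_top hCttop.lt_top
          (ENNReal.add_lt_top.mpr ⟨epp_fin.lt_top, enn_fin.lt_top⟩))).ne
      refine le_trans (ENNReal.toReal_mono h2 h1) ?_
      rw [ENNReal.toReal_mul, ENNReal.toReal_mul, ENNReal.toReal_add epp_fin enn_fin,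
        hCt, ENNReal.toReal_ofReal h1t.le]
      exact le_of_eq (by rw [← hE1, ← hE2]; ring)
    have hlower : E3 + E4 - (2*(k*t) + 2*Real.sqrt (E1*(k*t)) + 2*Real.sqrt (E2*(k*t)))
        ≤ (mutualE κ (Rpos m p ν) (Rneg m p ν) + mutualE κ (Rneg m p ν) (Rpos m p ν)).toReal := by
      have h1 : mutualE κ P' N' + mutualE κ N' P'
          ≤ mutualE κ (Rpos m p ν) (Rneg m p ν) + mutualE κ (Rneg m p ν) (Rpos m p ν) :=
        add_le_add (mutualE_mono hPν_ge hNν_ge) (mutualE_mono hNν_ge hPν_ge)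
      have h2 : (mutualE κ P' N' + mutualE κ N' P').toReal
          ≤ (mutualE κ (Rpos m p ν) (Rneg m p ν)
            + mutualE κ (Rneg m p ν) (Rpos m p ν)).toReal :=
        ENNReal.toReal_mono (ENNReal.add_ne_top.mpr ⟨he12ν_fin, he21ν_fin⟩) h1
      refine le_trans ?_ h2
      rw [ENNReal.toReal_add hP'N'fin hN'P'fin]
      have e1 : (mutualE κ P' N').toReal
          = E3 - ((mutualE κ P' R').toReal + (mutualE κ Q' N).toReal) := by
        rw [hre1]; ring
      have e2 : (mutualE κ N' P').toReal
          = E4 - ((mutualE κ N' Q').toReal + (mutualE κ R' P).toReal) := by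
        rw [hre2]; ring
      rw [e1, e2]
      linarith [hP'R'le, hN'Q'le, hQ'Nle, hR'Ple]
    have hbound : assocNormSq κ m p ν ≤ Bfun t := by
      have h1 : assocNormSq κ m p ν
          = (mutualE κ (Rpos m p ν) (Rpos m p ν) + mutualE κ (Rneg m p ν) (Rneg m p ν)).toReal
          - (mutualE κ (Rpos m p ν) (Rneg m p ν)
            + mutualE κ (Rneg m p ν) (Rpos m p ν)).toReal := rfl
      rw [h1, hBfun]
      dsimp only
      linarith [hupper, hlower]
    calc (⨅ K : CompactSub A, minE κ K.1 (aVec a) g) ≤ minE κ KS.1 (aVec a) g :=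
          iInf_le _ KS
      _ ≤ ENNReal.ofReal (assocNormSq κ m p ν) := iInf_le_of_le ν (iInf_le_of_le hinEAb le_rfl)
      _ ≤ ENNReal.ofReal (Bfun t) := ENNReal.ofReal_le_ofReal hbound
  have hB0 : Bfun 0 = assocNormSq κ m p μ := by
    have h1 : assocNormSq κ m p μ = (E1 + E2) - (E3 + E4) := by
      show (mutualE κ P P + mutualE κ N N).toReal - (mutualE κ P N + mutualE κ N P).toReal = _
      rw [ENNReal.toReal_add epp_fin enn_fin, ENNReal.toReal_add epn_fin enp_fin, hE1, hE2,
        hE3, hE4]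
    rw [h1, hBfun]
    simp only [mul_zero, Real.sqrt_zero]
    ring
  have hcont : Continuous Bfun := by
    rw [hBfun]
    have hlin : Continuous fun t : ℝ => k * t := continuous_const.mul continuous_id
    refine Continuous.add (Continuous.add (Continuous.add
      (Continuous.sub (Continuous.sub ?_ continuous_const) continuous_const) ?_) ?_) ?_
    · exact ((continuous_const.add continuous_id).pow 2).mul continuous_const
    · exact continuous_const.mul hlin
    · exact continuous_const.mul (Real.continuous_sqrt.comp (continuous_const.mul hlin))
    · exact continuous_const.mul (Real.continuous_sqrt.comp (continuous_const.mul hlin))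
  have htend : Tendsto (fun s => ENNReal.ofReal (Bfun s)) (nhdsWithin 0 (Ioi 0))
      (nhds (ENNReal.ofReal (assocNormSq κ m p μ))) := by
    rw [← hB0]
    exact (ENNReal.continuous_ofReal.tendsto _).comp ((hcont.tendsto 0).mono_left
      nhdsWithin_le_nhds)
  exact ge_of_tendsto htend (eventually_nhdsWithin_of_forall fun s hs => hmain s hs)

end Main


open Zorii in
/-- Lemma 2: `cap(A,a,g) = lim_{K↑A} cap(K,a,g)` as `K` ranges over the
increasing family of all compact condensers `K ≺ A`. -/
theorem statement1
    {X : Type} [TopologicalSpace X] [T2Space X] [LocallyCompactSpace X]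
    [MeasurableSpace X] [BorelSpace X]
    (κ : X → X → ℝ≥0∞) (hker : IsKernel κ) (hpd : PositiveDefinite κ)
    (m p : ℕ) (hm : 0 < m) (A : Condenser X m p)
    (g : X → ℝ) (hgc : Continuous g) (hgpos : ∀ x, 0 < g x)
    (a : Fin (m + p) → ℝ) (ha : ∀ i, 0 < a i) :
    Filter.Tendsto (fun K : CompactSub A => cap κ K.1 a g) Filter.atTop
      (nhds (cap κ A a g)) := by
  have hmono : Monotone (fun K : CompactSub A => cap κ K.1 a g) := by
    intro K L hKL
    show (minE κ K.1 (aVec a) g)⁻¹ ≤ (minE κ L.1 (aVec a) g)⁻¹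
    exact ENNReal.inv_le_inv.mpr (minE_le_of_prec hKL _ _)
  have h1 : (⨅ K : CompactSub A, minE κ K.1 (aVec a) g) = minE κ A (aVec a) g := by
    refine le_antisymm ?_ (le_iInf fun K => minE_le_of_prec K.2.2 _ _)
    refine le_iInf fun ν => le_iInf fun hν => key_le hker hpd A hgpos ha hν
  have hiSup : (⨆ K : CompactSub A, cap κ K.1 a g) = cap κ A a g := by
    simp only [cap]
    rw [← h1, ENNReal.inv_iInf]
  have h2 := tendsto_atTop_iSup hmono
  rwa [hiSup] at h2
end
end

section
/- Let κ be a positive definite kernel on a locally compact Hausdorff space X, A an (m,p)-condenser, g : X → (0,∞) continuous, and a = (a_i)_{i∈I} with a_i > 0. Then ‖E(A,a,g)‖² = ‖E⁰(A,a,g)‖²; that is, cap(A,a,g) is unchanged if in its definition the class E(A,a,g) is replaced by the subclass E⁰(A,a,g) of measures with compactly supported coordinates. -/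
open MeasureTheory Filter Topology Set ENNReal NNReal

noncomputable section

section Stmt2Aux

set_option linter.unusedSectionVars false

open Zorii MeasureTheory Filter Topology Set ENNReal NNReal

namespace Stmt2aux

variable {X : Type} [TopologicalSpace X] [T2Space X] [MeasurableSpace X]
  [OpensMeasurableSpace X]

lemma meas_sum_le_sum {ι : Type*} {s : Finset ι} {μ ν : ι → Measure X}
    (h : ∀ i ∈ s, μ i ≤ ν i) :
    ∑ i ∈ s, μ i ≤ ∑ i ∈ s, ν i :=
  Measure.le_iff'.2 fun t => by
    rw [Measure.finset_sum_apply, Measure.finset_sum_apply]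
    exact Finset.sum_le_sum fun i hi => Measure.le_iff'.1 (h i hi) t

lemma meas_single_le_sum {ι : Type*} {s : Finset ι} {μ : ι → Measure X} {i : ι} (hi : i ∈ s) :
    μ i ≤ ∑ j ∈ s, μ j :=
  Measure.le_iff'.2 fun t => by
    rw [Measure.finset_sum_apply]
    exact Finset.single_le_sum (f := fun j => μ j t) (fun j _ => zero_le) hi

lemma meas_smul_le_smul {μ : Measure X} {c d : ℝ≥0∞} (h : c ≤ d) : c • μ ≤ d • μ :=
  Measure.le_iff'.2 fun t => by
    simp only [Measure.smul_apply, smul_eq_mul]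
    exact mul_le_mul_left h _

lemma meas_le_smul {μ : Measure X} {c : ℝ≥0∞} (h : 1 ≤ c) : μ ≤ c • μ := by
  simpa using meas_smul_le_smul (μ := μ) h

lemma sigmaFinite_of_weight {g : X → ℝ≥0∞} (hg : Measurable g) (hgpos : ∀ x, 0 < g x)
    (μ : Measure X) (h : ∫⁻ x, g x ∂μ ≠ ⊤) : SigmaFinite μ := by
  refine ⟨⟨⟨fun n => {x | ((n : ℝ≥0∞) + 1)⁻¹ ≤ g x}, fun _ => trivial, fun n => ?_, ?_⟩⟩⟩
  · have h1 : ((n : ℝ≥0∞) + 1)⁻¹ ≠ 0 := ENNReal.inv_ne_zero.2 (by simp)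
    have h2 : ((n : ℝ≥0∞) + 1)⁻¹ ≠ ⊤ := ENNReal.inv_ne_top.2 (by simp)
    calc μ {x | ((n : ℝ≥0∞) + 1)⁻¹ ≤ g x} ≤ (∫⁻ x, g x ∂μ) / ((n : ℝ≥0∞) + 1)⁻¹ :=
          meas_ge_le_lintegral_div hg.aemeasurable h1 h2
      _ < ⊤ := ENNReal.div_lt_top h h1
  · ext x
    simp only [Set.mem_iUnion, Set.mem_setOf_eq, Set.mem_univ, iff_true]
    obtain ⟨n, hn⟩ := ENNReal.exists_inv_nat_lt (hgpos x).ne'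
    exact ⟨n, le_trans (ENNReal.inv_le_inv.2 (by exact_mod_cast Nat.le_succ n)) hn.le⟩

lemma nat_cast_add_one_mono {n k : ℕ} (hnk : n ≤ k) :
    ((n : ℝ≥0∞) + 1) ≤ ((k : ℝ≥0∞) + 1) := by
  exact_mod_cast add_le_add_left (Nat.cast_le.2 hnk) 1

/-- Key inner-approximation lemma. -/
lemma key_approx (μ : Measure X) (hreg : μ.InnerRegular) {S : Set X} (hS : MeasurableSet S)
    (hSc : μ Sᶜ = 0) {f : X → ℝ≥0∞} (hf : Measurable f)
    (hfin : ∫⁻ x, f x ∂μ ≠ ⊤) {ε : ℝ≥0∞} (hε : ε ≠ 0) :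
    ∃ K, IsCompact K ∧ K ⊆ S ∧ ∫⁻ x, f x ∂μ ≤ ∫⁻ x in K, f x ∂μ + ε := by
  classical
  set σ : Measure X := μ.withDensity f with hσdef
  have hσap : ∀ t : Set X, MeasurableSet t → σ t = ∫⁻ x in t, f x ∂μ := fun t ht =>
    withDensity_apply f ht
  have hσuniv : σ univ = ∫⁻ x, f x ∂μ := by
    rw [hσap univ MeasurableSet.univ, setLIntegral_univ]
  set E : ℕ → Set X := fun n => S ∩ {x | ((n : ℝ≥0∞) + 1)⁻¹ ≤ f x ∧ f x ≤ (n : ℝ≥0∞) + 1}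
    with hEdef
  have hEm : ∀ n, MeasurableSet (E n) := fun n =>
    hS.inter ((hf measurableSet_Ici).inter (hf measurableSet_Iic))
  have hEsub : ∀ n, E n ⊆ S := fun n => inter_subset_left
  have hEmono : Monotone E := by
    intro n k hnk x hx
    exact ⟨hx.1, le_trans (ENNReal.inv_le_inv.2 (nat_cast_add_one_mono hnk)) hx.2.1,
      le_trans hx.2.2 (nat_cast_add_one_mono hnk)⟩
  have htopnull : μ {x | f x = ⊤} = 0 := by
    have h1 : ∀ᵐ x ∂μ, f x < ⊤ := ae_lt_top hf hfin
    rw [ae_iff] at h1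
    exact measure_mono_null (fun x hx => by simp [Set.mem_setOf_eq] at hx ⊢; simp [hx]) h1
  have hzeronull : σ (f ⁻¹' {0}) = 0 := by
    rw [hσap _ (hf (measurableSet_singleton 0))]
    rw [setLIntegral_congr_fun (hf (measurableSet_singleton 0))
      (fun x hx => hx)]
    simp
  have hbad : σ (Sᶜ ∪ (f ⁻¹' {0} ∪ {x | f x = ⊤})) = 0 := by
    refine measure_union_null ?_ (measure_union_null hzeronull ?_)
    · exact (withDensity_absolutelyContinuous μ f) hSc
    · exact (withDensity_absolutelyContinuous μ f) htopnull
  have hcover : univ ⊆ (⋃ n, E n) ∪ (Sᶜ ∪ (f ⁻¹' {0} ∪ {x | f x = ⊤})) := by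
    intro x _
    by_cases hxS : x ∈ S
    · by_cases h0 : f x = 0
      · exact Or.inr (Or.inr (Or.inl h0))
      · by_cases hT : f x = ⊤
        · exact Or.inr (Or.inr (Or.inr hT))
        · obtain ⟨n₁, hn₁⟩ := ENNReal.exists_inv_nat_lt h0
          obtain ⟨n₂, hn₂⟩ := ENNReal.exists_nat_gt hT
          refine Or.inl (mem_iUnion.2 ⟨max n₁ n₂, hxS, ?_, ?_⟩)
          · refine le_trans (ENNReal.inv_le_inv.2 ?_) hn₁.le
            calc ((n₁ : ℝ≥0∞)) ≤ ((max n₁ n₂ : ℕ) : ℝ≥0∞) := by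
                  exact_mod_cast le_max_left n₁ n₂
              _ ≤ ((max n₁ n₂ : ℕ) : ℝ≥0∞) + 1 := le_self_add
          · refine le_trans hn₂.le ?_
            calc ((n₂ : ℝ≥0∞)) ≤ ((max n₁ n₂ : ℕ) : ℝ≥0∞) := by
                  exact_mod_cast le_max_right n₁ n₂
              _ ≤ ((max n₁ n₂ : ℕ) : ℝ≥0∞) + 1 := le_self_add
    · exact Or.inr (Or.inl hxS)
  have hσU : σ univ = ⨆ n, σ (E n) := by
    have h2 : σ (⋃ n, E n) = ⨆ n, σ (E n) := hEmono.directed_le.measure_iUnion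
    have h1 : σ univ ≤ σ (⋃ n, E n) := by
      calc σ univ ≤ σ ((⋃ n, E n) ∪ (Sᶜ ∪ (f ⁻¹' {0} ∪ {x | f x = ⊤}))) :=
            measure_mono hcover
        _ ≤ σ (⋃ n, E n) + σ (Sᶜ ∪ (f ⁻¹' {0} ∪ {x | f x = ⊤})) := measure_union_le _ _
        _ = σ (⋃ n, E n) := by rw [hbad, add_zero]
    exact le_antisymm (h1.trans_eq h2) (h2 ▸ measure_mono (subset_univ _))
  have hσfin : σ univ ≠ ⊤ := by rw [hσuniv]; exact hfin
  have hε2 : (ε / 2 : ℝ≥0∞) ≠ 0 := by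
    simp only [Ne, ENNReal.div_eq_zero_iff]
    push_neg
    exact ⟨hε, by simp⟩
  obtain ⟨n, hn⟩ : ∃ n, σ univ ≤ σ (E n) + ε / 2 := by
    by_cases h0 : σ univ = 0
    · exact ⟨0, by simp [h0]⟩
    · have hlt : σ univ - ε / 2 < ⨆ n, σ (E n) :=
        hσU ▸ ENNReal.sub_lt_self hσfin h0 hε2
      obtain ⟨n, hn⟩ := lt_iSup_iff.1 hlt
      exact ⟨n, by
        rw [add_comm]
        exact tsub_le_iff_left.1 hn.le⟩
  have honef : ∀ x ∈ E n, (1 : ℝ≥0∞) ≤ ((n : ℝ≥0∞) + 1) * f x := by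
    intro x hx
    calc (1 : ℝ≥0∞) = ((n : ℝ≥0∞) + 1) * ((n : ℝ≥0∞) + 1)⁻¹ := by
          rw [ENNReal.mul_inv_cancel (by simp) (by simp)]
      _ ≤ ((n : ℝ≥0∞) + 1) * f x := mul_le_mul_right hx.2.1 _
  have hμEn : μ (E n) ≤ ((n : ℝ≥0∞) + 1) * σ (E n) := by
    calc μ (E n) = ∫⁻ _ in E n, (1 : ℝ≥0∞) ∂μ := by simp
      _ ≤ ∫⁻ x in E n, ((n : ℝ≥0∞) + 1) * f x ∂μ :=
          setLIntegral_mono (by fun_prop) honef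
      _ = ((n : ℝ≥0∞) + 1) * ∫⁻ x in E n, f x ∂μ := lintegral_const_mul' _ _ (by simp)
      _ = ((n : ℝ≥0∞) + 1) * σ (E n) := by rw [hσap _ (hEm n)]
  have hμEnfin : μ (E n) ≠ ⊤ := by
    refine ne_top_of_le_ne_top ?_ hμEn
    exact ENNReal.mul_ne_top (by simp)
      (ne_top_of_le_ne_top hσfin (measure_mono (subset_univ _)))
  set δ : ℝ≥0∞ := (ε / 2) / ((n : ℝ≥0∞) + 1) with hδdef
  have hδ0 : δ ≠ 0 := by
    intro hc
    rw [hδdef, ENNReal.div_eq_zero_iff] at hc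
    rcases hc with hc | hc
    · exact hε2 hc
    · simp at hc
  obtain ⟨K, hKE, hKc, hK⟩ : ∃ K, K ⊆ E n ∧ IsCompact K ∧ μ (E n) ≤ μ K + δ := by
    by_cases hcase : μ (E n) ≤ δ
    · exact ⟨∅, empty_subset _, isCompact_empty, hcase.trans (by simp)⟩
    · push_neg at hcase
      have hμEn0 : μ (E n) ≠ 0 := (lt_trans (pos_iff_ne_zero.2 hδ0) hcase).ne'
      have hr : μ (E n) - δ < μ (E n) := ENNReal.sub_lt_self hμEnfin hμEn0 hδ0
      obtain ⟨K, hKE, hKc, hK⟩ := hreg.innerRegular (hEm n) (μ (E n) - δ) hr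
      refine ⟨K, hKE, hKc, ?_⟩
      calc μ (E n) = (μ (E n) - δ) + δ := (tsub_add_cancel_of_le hcase.le).symm
        _ ≤ μ K + δ := add_le_add_left hK.le _
  have hdiff : μ (E n \ K) ≤ δ := by
    rw [measure_diff hKE hKc.measurableSet.nullMeasurableSet
      (ne_top_of_le_ne_top hμEnfin (measure_mono hKE))]
    exact tsub_le_iff_right.2 (by rwa [add_comm] at hK)
  have hσdiff : σ (E n \ K) ≤ ε / 2 := by
    have hbound : ∀ x ∈ E n \ K, f x ≤ ((n : ℝ≥0∞) + 1) := fun x hx => hx.1.2.2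
    calc σ (E n \ K) = ∫⁻ x in E n \ K, f x ∂μ :=
          hσap _ ((hEm n).diff hKc.measurableSet)
      _ ≤ ∫⁻ _ in E n \ K, ((n : ℝ≥0∞) + 1) ∂μ := setLIntegral_mono (by fun_prop) hbound
      _ = ((n : ℝ≥0∞) + 1) * μ (E n \ K) := by simp [mul_comm]
      _ ≤ ((n : ℝ≥0∞) + 1) * δ := mul_le_mul_right hdiff _
      _ = ε / 2 := by
          rw [hδdef, ENNReal.mul_div_cancel' (by simp) (by simp)]
  refine ⟨K, hKc, hKE.trans (hEsub n), ?_⟩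
  have hEnK : σ (E n) ≤ σ K + σ (E n \ K) :=
    le_trans (measure_mono (fun x hx => by
      by_cases hxK : x ∈ K
      · exact Or.inl hxK
      · exact Or.inr ⟨hx, hxK⟩)) (measure_union_le _ _)
  calc ∫⁻ x, f x ∂μ = σ univ := hσuniv.symm
    _ ≤ σ (E n) + ε / 2 := hn
    _ ≤ (σ K + σ (E n \ K)) + ε / 2 := add_le_add_left hEnK _
    _ ≤ (σ K + ε / 2) + ε / 2 := add_le_add_left (add_le_add_right hσdiff _) _
    _ = σ K + ε := by rw [add_assoc, ENNReal.add_halves]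
    _ = ∫⁻ x in K, f x ∂μ + ε := by rw [hσap K hKc.measurableSet]

lemma slack_le {x s t : ℝ≥0∞} (hx : x ≠ ⊤) (ht : t ≤ x) (h : x ≤ s + (x - t)) : t ≤ s := by
  have h2 : x + t ≤ x + s := by
    calc x + t ≤ (s + (x - t)) + t := add_le_add_left h t
      _ = s + x := by rw [add_assoc, tsub_add_cancel_of_le ht]
      _ = x + s := add_comm _ _
  exact (ENNReal.add_le_add_iff_left hx).1 h2

lemma innerRegular_restrict {μ : Measure X} (h : μ.InnerRegular) {T : Set X}
    (hT : MeasurableSet T) : (μ.restrict T).InnerRegular := by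
  constructor
  intro E hE r hr
  rw [Measure.restrict_apply hE] at hr
  obtain ⟨Kc, hKsub, hKcomp, hK⟩ := h.innerRegular (hE.inter hT) r hr
  refine ⟨Kc, hKsub.trans inter_subset_left, hKcomp, ?_⟩
  rwa [Measure.restrict_apply hKcomp.measurableSet,
    inter_eq_self_of_subset_left (hKsub.trans inter_subset_right)]

lemma lsc_section {κ : X → X → ℝ≥0∞} (hκ : LowerSemicontinuous (Function.uncurry κ))
    (x : X) : Measurable (fun y => κ x y) := by
  have h : LowerSemicontinuous (fun y => Function.uncurry κ (x, y)) :=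
    hκ.comp (Continuous.prodMk_right x)
  exact h.measurable

lemma lsc_min_const {Z : Type*} [TopologicalSpace Z] {f : Z → ℝ≥0∞}
    (hf : LowerSemicontinuous f) (M : ℝ≥0∞) :
    LowerSemicontinuous (fun z => min (f z) M) := by
  intro z c hc
  have h1 := hf z c (hc.trans_le (min_le_left _ _))
  filter_upwards [h1] with z' hz'
  exact lt_min hz' (hc.trans_le (min_le_right _ _))

lemma iSup_min_nat (v : ℝ≥0∞) : ⨆ M : ℕ, min v (M : ℝ≥0∞) = v := by
  refine le_antisymm (iSup_le fun M => min_le_left _ _) ?_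
  by_cases hv : v = ⊤
  · subst hv
    calc (⊤ : ℝ≥0∞) = ⨆ M : ℕ, (M : ℝ≥0∞) := ENNReal.iSup_natCast.symm
      _ ≤ ⨆ M : ℕ, min ⊤ (M : ℝ≥0∞) := by simp
  · obtain ⟨M, hM⟩ := ENNReal.exists_nat_gt hv
    exact le_iSup_of_le M (by rw [min_eq_left hM.le])

/-- The potential of an arbitrary inner regular σ-finite measure with respect to a lower
semicontinuous kernel is lower semicontinuous. -/
lemma potOf_lsc {κ : X → X → ℝ≥0∞} (hκ : LowerSemicontinuous (Function.uncurry κ))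
    (ν : Measure X) (hsgf : SigmaFinite ν) (hreg : ν.InnerRegular) :
    LowerSemicontinuous (potOf κ ν) := by
  classical
  intro x₀ c hc
  have hcT : c ≠ ⊤ := hc.ne_top
  -- cutoff in the value of the kernel
  have hMeq : potOf κ ν x₀ = ⨆ M : ℕ, ∫⁻ y, min (κ x₀ y) M ∂ν := by
    calc potOf κ ν x₀ = ∫⁻ y, κ x₀ y ∂ν := rfl
      _ = ∫⁻ y, ⨆ M : ℕ, min (κ x₀ y) M ∂ν :=
          lintegral_congr fun y => (iSup_min_nat _).symm
      _ = ⨆ M : ℕ, ∫⁻ y, min (κ x₀ y) M ∂ν :=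
          lintegral_iSup (fun M => (lsc_section hκ x₀).min measurable_const)
            (fun M M' hMM' y => min_le_min le_rfl (by exact_mod_cast hMM'))
  rw [hMeq] at hc
  obtain ⟨M, hM⟩ := lt_iSup_iff.1 hc
  set h₀ : X → ℝ≥0∞ := fun y => min (κ x₀ y) M with hh₀def
  have hh₀m : Measurable h₀ := (lsc_section hκ x₀).min measurable_const
  -- cutoff to a finite piece of ν
  have hneq : (∫⁻ y, h₀ y ∂ν) = ⨆ n : ℕ, ∫⁻ y, h₀ y ∂(ν.restrict (spanningSets ν n)) := by
    set w : Measure X := ν.withDensity h₀ with hwdef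
    have h1 : ∀ n, ∫⁻ y, h₀ y ∂(ν.restrict (spanningSets ν n)) = w (spanningSets ν n) :=
      fun n => (withDensity_apply h₀ (measurableSet_spanningSets ν n)).symm
    have h2 : w univ = ∫⁻ y, h₀ y ∂ν := by
      rw [hwdef, withDensity_apply h₀ MeasurableSet.univ, setLIntegral_univ]
    have h3 : w univ = ⨆ n, w (spanningSets ν n) := by
      rw [← iUnion_spanningSets ν]
      exact (monotone_spanningSets ν).directed_le.measure_iUnion
    simp_rw [h1]
    rw [← h3, h2]
  rw [hneq] at hM
  obtain ⟨n, hn⟩ := lt_iSup_iff.1 hM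
  set ν1 : Measure X := ν.restrict (spanningSets ν n) with hν1def
  haveI : IsFiniteMeasure ν1 := ⟨by
    rw [hν1def, Measure.restrict_apply_univ]; exact measure_spanningSets_lt_top ν n⟩
  have hν1reg : ν1.InnerRegular := innerRegular_restrict hreg (measurableSet_spanningSets ν n)
  have hν1le : ν1 ≤ ν := Measure.restrict_le_self
  -- simple function below h₀ with large integral
  rw [lintegral_eq_iSup_eapprox_lintegral hh₀m] at hn
  obtain ⟨n', hφ⟩ := lt_iSup_iff.1 hn
  set φ := SimpleFunc.eapprox h₀ n' with hφdef
  have hφle : ∀ y, φ y ≤ h₀ y := fun y =>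
    (le_iSup (fun k => SimpleFunc.eapprox h₀ k y) n').trans_eq
      (SimpleFunc.iSup_eapprox_apply hh₀m y)
  set t : ℝ≥0∞ := φ.lintegral ν1 with htdef
  have htT : t ≠ ⊤ := by
    have h1 : t = ∫⁻ y, φ y ∂ν1 := (φ.lintegral_eq_lintegral ν1).symm
    have h2 : (∫⁻ y, φ y ∂ν1) ≤ ∫⁻ _, (M : ℝ≥0∞) ∂ν1 :=
      lintegral_mono fun y => (hφle y).trans (min_le_right _ _)
    rw [h1]
    refine ne_top_of_le_ne_top ?_ h2
    rw [lintegral_const]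
    exact ENNReal.mul_ne_top (by simp) (measure_ne_top ν1 _)
  have ht : t = ∑ a ∈ φ.range, a * ν1 (φ ⁻¹' {a}) := rfl
  set gap : ℝ≥0∞ := t - c with hgapdef
  have hgap0 : gap ≠ 0 := (tsub_pos_of_lt hφ).ne'
  have hgapT : gap ≠ ⊤ := ne_top_of_le_ne_top htT tsub_le_self
  set n₀ : ℕ := φ.range.card with hn₀def
  set δ : ℝ≥0∞ := (gap / 2) / ((n₀ : ℝ≥0∞) + 1) with hδdef
  have hgap2 : (gap / 2 : ℝ≥0∞) ≠ 0 := by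
    simp only [Ne, ENNReal.div_eq_zero_iff]
    push_neg
    exact ⟨hgap0, by simp⟩
  have hδ0 : δ ≠ 0 := by
    intro hcon
    rw [hδdef, ENNReal.div_eq_zero_iff] at hcon
    rcases hcon with hcon | hcon
    · exact hgap2 hcon
    · simp at hcon
  -- compacts inside the fibers
  have hCex : ∀ a : ℝ≥0∞, ∃ C : Set X, IsCompact C ∧ C ⊆ φ ⁻¹' {a} ∧
      a * ν1 (φ ⁻¹' {a}) ≤ a * ν1 C + δ := by
    intro a
    by_cases h0 : a = 0
    · exact ⟨∅, isCompact_empty, empty_subset _, by simp [h0]⟩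
    by_cases hB0 : ν1 (φ ⁻¹' {a}) = 0
    · exact ⟨∅, isCompact_empty, empty_subset _, by simp [hB0]⟩
    have haT : a ≠ ⊤ := by
      intro haT
      have hmem : a ∈ φ.range := by
        by_contra hmem
        exact hB0 (by rw [SimpleFunc.preimage_eq_empty_iff φ a |>.2 hmem]; simp)
      have hle : a * ν1 (φ ⁻¹' {a}) ≤ t :=
        ht ▸ Finset.single_le_sum (f := fun a => a * ν1 (φ ⁻¹' {a}))
          (fun _ _ => zero_le) hmem
      subst haT
      rw [ENNReal.top_mul hB0] at hle
      exact htT (top_le_iff.1 hle)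
    have hBfin : ν1 (φ ⁻¹' {a}) ≠ ⊤ := measure_ne_top ν1 _
    have hδa0 : δ / a ≠ 0 := by
      intro hcon
      rw [ENNReal.div_eq_zero_iff] at hcon
      rcases hcon with hcon | hcon
      · exact hδ0 hcon
      · exact haT hcon
    by_cases hsmall : ν1 (φ ⁻¹' {a}) ≤ δ / a
    · refine ⟨∅, isCompact_empty, empty_subset _, ?_⟩
      calc a * ν1 (φ ⁻¹' {a}) ≤ a * (δ / a) := mul_le_mul_right hsmall _
        _ = δ := ENNReal.mul_div_cancel h0 haT
        _ ≤ a * ν1 ∅ + δ := le_add_self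
    · push_neg at hsmall
      have hr : ν1 (φ ⁻¹' {a}) - δ / a < ν1 (φ ⁻¹' {a}) :=
        ENNReal.sub_lt_self hBfin ((pos_iff_ne_zero.2 hδa0).trans hsmall).ne' hδa0
      obtain ⟨C, hCsub, hCc, hC⟩ := hν1reg.innerRegular (φ.measurableSet_fiber a) _ hr
      refine ⟨C, hCc, hCsub, ?_⟩
      calc a * ν1 (φ ⁻¹' {a}) = a * ((ν1 (φ ⁻¹' {a}) - δ / a) + δ / a) := by
            rw [tsub_add_cancel_of_le hsmall.le]
        _ ≤ a * (ν1 C + δ / a) := mul_le_mul_right (add_le_add_left hC.le _) _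
        _ = a * ν1 C + a * (δ / a) := mul_add _ _ _
        _ = a * ν1 C + δ := by rw [ENNReal.mul_div_cancel h0 haT]
  choose C hCc hCsub hCle using hCex
  set Sm : ℝ≥0∞ := ∑ a ∈ φ.range, a * ν1 (C a) with hSmdef
  have hSmle : Sm ≤ t := by
    rw [hSmdef, ht]
    exact Finset.sum_le_sum fun a _ => mul_le_mul_right (measure_mono (hCsub a)) a
  have hSmT : Sm ≠ ⊤ := ne_top_of_le_ne_top htT hSmle
  have hcSm : c < Sm := by
    have h1 : t ≤ Sm + ((n₀ : ℝ≥0∞) + 1) * δ := by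
      calc t = ∑ a ∈ φ.range, a * ν1 (φ ⁻¹' {a}) := ht
        _ ≤ ∑ a ∈ φ.range, (a * ν1 (C a) + δ) := Finset.sum_le_sum fun a _ => hCle a
        _ = Sm + (n₀ : ℝ≥0∞) * δ := by
            rw [Finset.sum_add_distrib, Finset.sum_const, nsmul_eq_mul, hSmdef, hn₀def]
        _ ≤ Sm + ((n₀ : ℝ≥0∞) + 1) * δ :=
            add_le_add_right (mul_le_mul_left le_self_add _) _
    have h2 : ((n₀ : ℝ≥0∞) + 1) * δ = gap / 2 := by
      rw [hδdef, ENNReal.mul_div_cancel' (by simp) (by simp)]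
    rw [h2] at h1
    have h3 : gap + c = t := by
      rw [hgapdef]
      exact tsub_add_cancel_of_le hφ.le
    have h4 : (gap / 2 + (gap / 2 + c)) ≤ gap / 2 + Sm := by
      calc gap / 2 + (gap / 2 + c) = (gap / 2 + gap / 2) + c := (add_assoc _ _ _).symm
        _ = gap + c := by rw [ENNReal.add_halves]
        _ = t := h3
        _ ≤ Sm + gap / 2 := h1
        _ = gap / 2 + Sm := add_comm _ _
    have h5 : gap / 2 + c ≤ Sm :=
      (ENNReal.add_le_add_iff_left (by
        exact ne_top_of_le_ne_top hgapT (ENNReal.half_le_self))).1 h4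
    calc c < c + gap / 2 := ENNReal.lt_add_right hcT hgap2
      _ = gap / 2 + c := add_comm _ _
      _ ≤ Sm := h5
  -- the multiplicative margin
  have hctSt : c.toReal < Sm.toReal := (ENNReal.toReal_lt_toReal hcT hSmT).2 hcSm
  have hSt0 : 0 < Sm.toReal := lt_of_le_of_lt ENNReal.toReal_nonneg hctSt
  set θr : ℝ := (c.toReal / Sm.toReal + 1) / 2 with hθrdef
  have hdiv01 : 0 ≤ c.toReal / Sm.toReal := div_nonneg ENNReal.toReal_nonneg hSt0.le
  have hdivlt : c.toReal / Sm.toReal < 1 := (div_lt_one hSt0).2 hctSt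
  have hθr0 : 0 < θr := by rw [hθrdef]; linarith
  have hθr1 : θr < 1 := by rw [hθrdef]; linarith
  set θ : ℝ≥0∞ := ENNReal.ofReal θr with hθdef
  have hθ1 : θ < 1 := ENNReal.ofReal_lt_one.2 hθr1
  have hcθ : c < θ * Sm := by
    have h2 : c.toReal < θr * Sm.toReal := by
      have h3 : c.toReal / Sm.toReal < θr := by rw [hθrdef]; linarith
      calc c.toReal = (c.toReal / Sm.toReal) * Sm.toReal :=
            (div_mul_cancel₀ c.toReal hSt0.ne').symm
        _ < θr * Sm.toReal := mul_lt_mul_of_pos_right h3 hSt0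
    calc c = ENNReal.ofReal c.toReal := (ENNReal.ofReal_toReal hcT).symm
      _ < ENNReal.ofReal (θr * Sm.toReal) :=
          (ENNReal.ofReal_lt_ofReal_iff (by nlinarith)).2 h2
      _ = ENNReal.ofReal θr * ENNReal.ofReal Sm.toReal := ENNReal.ofReal_mul hθr0.le
      _ = θ * Sm := by rw [hθdef, ENNReal.ofReal_toReal hSmT]
  -- open neighborhoods via the tube lemma
  have hUex : ∀ a : ℝ≥0∞, ∃ U : Set X, IsOpen U ∧ x₀ ∈ U ∧
      ∀ x ∈ U, θ * (a * ν1 (C a)) ≤ ∫⁻ y in C a, κ x y ∂ν1 := by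
    intro a
    by_cases h0 : a = 0
    · exact ⟨univ, isOpen_univ, mem_univ _, fun x _ => by simp [h0]⟩
    by_cases hCe : C a = ∅
    · exact ⟨univ, isOpen_univ, mem_univ _, fun x _ => by simp [hCe]⟩
    obtain ⟨y₀, hy₀⟩ := nonempty_iff_ne_empty.2 hCe
    have hφy₀ : φ y₀ = a := hCsub a hy₀
    have haT : a ≠ ⊤ := by
      rw [← hφy₀]
      exact (SimpleFunc.eapprox_lt_top h₀ n' y₀).ne
    have hθa : θ * a < a := by
      calc θ * a < 1 * a := ENNReal.mul_lt_mul_left h0 haT hθ1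
        _ = a := one_mul a
    have hsub : ({x₀} : Set X) ×ˢ C a ⊆ Function.uncurry κ ⁻¹' Ioi (θ * a) := by
      rintro ⟨x, y⟩ ⟨hx, hy⟩
      have hx' : x = x₀ := hx
      have h1 : a ≤ κ x y := by
        rw [hx']
        calc a = φ y := (hCsub a hy).symm
          _ ≤ h₀ y := hφle y
          _ ≤ κ x₀ y := min_le_left _ _
      exact mem_preimage.2 (lt_of_lt_of_le hθa h1)
    obtain ⟨U, V, hUo, _hVo, hxU, hCV, hUV⟩ :=
      generalized_tube_lemma isCompact_singleton (hCc a)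
        (hκ.isOpen_preimage (θ * a)) hsub
    refine ⟨U, hUo, hxU rfl, fun x hx => ?_⟩
    have hpt : ∀ y ∈ C a, θ * a ≤ κ x y := fun y hy =>
      (hUV (mk_mem_prod hx (hCV hy))).le
    calc θ * (a * ν1 (C a)) = ∫⁻ _ in C a, θ * a ∂ν1 := by
          rw [setLIntegral_const, mul_assoc]
      _ ≤ ∫⁻ y in C a, κ x y ∂ν1 := setLIntegral_mono (lsc_section hκ x) hpt
  choose U hUo hUx hUb using hUex
  have hUopen : IsOpen (⋂ a ∈ φ.range, U a) := isOpen_biInter_finset fun a _ => hUo a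
  have hx₀U : x₀ ∈ ⋂ a ∈ φ.range, U a := mem_iInter₂.2 fun a _ => hUx a
  refine Filter.eventually_of_mem (hUopen.mem_nhds hx₀U) fun x hx => ?_
  have hxa : ∀ a ∈ φ.range, x ∈ U a := mem_iInter₂.1 hx
  have hdisj : (↑φ.range : Set ℝ≥0∞).PairwiseDisjoint C := by
    intro a _ b _ hab
    refine Set.disjoint_left.2 fun y hya hyb => hab ?_
    have h1 : φ y = a := hCsub a hya
    have h2 : φ y = b := hCsub b hyb
    rw [← h1, h2]
  calc c < θ * Sm := hcθ
    _ = ∑ a ∈ φ.range, θ * (a * ν1 (C a)) := by rw [hSmdef, Finset.mul_sum]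
    _ ≤ ∑ a ∈ φ.range, ∫⁻ y in C a, κ x y ∂ν1 :=
        Finset.sum_le_sum fun a ha => hUb a x (hxa a ha)
    _ = ∫⁻ y in ⋃ a ∈ φ.range, C a, κ x y ∂ν1 :=
        (lintegral_biUnion_finset hdisj (fun a _ => (hCc a).measurableSet) _).symm
    _ ≤ ∫⁻ y, κ x y ∂ν1 := lintegral_mono' Measure.restrict_le_self le_rfl
    _ ≤ ∫⁻ y, κ x y ∂ν := lintegral_mono' hν1le le_rfl

lemma potOf_measurable {κ : X → X → ℝ≥0∞} (hκ : LowerSemicontinuous (Function.uncurry κ))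
    (ν : Measure X) (hsgf : SigmaFinite ν) (hreg : ν.InnerRegular) :
    Measurable (potOf κ ν) :=
  (potOf_lsc hκ ν hsgf hreg).measurable

lemma mutualE_mono {κ : X → X → ℝ≥0∞} {σ σ' ρ ρ' : Measure X}
    (h1 : σ ≤ σ') (h2 : ρ ≤ ρ') : mutualE κ σ ρ ≤ mutualE κ σ' ρ' :=
  lintegral_mono' h1 (fun _x => lintegral_mono' h2 le_rfl)

lemma mutualE_smul_left {κ : X → X → ℝ≥0∞} (c : ℝ≥0∞) (σ ρ : Measure X) :
    mutualE κ (c • σ) ρ = c * mutualE κ σ ρ :=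
  lintegral_smul_measure _ _

lemma mutualE_smul_right {κ : X → X → ℝ≥0∞} {c : ℝ≥0∞} (hc : c ≠ ⊤) (σ ρ : Measure X) :
    mutualE κ σ (c • ρ) = c * mutualE κ σ ρ := by
  unfold mutualE
  simp_rw [lintegral_smul_measure]
  exact lintegral_const_mul' _ _ hc

lemma mutualE_sum {κ : X → X → ℝ≥0∞}
    {ι : Type*} (s t : Finset ι) (σ ρ : ι → Measure X)
    (hmeas : ∀ j, Measurable (potOf κ (ρ j))) :
    mutualE κ (∑ i ∈ s, σ i) (∑ j ∈ t, ρ j) =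
      ∑ i ∈ s, ∑ j ∈ t, mutualE κ (σ i) (ρ j) := by
  unfold mutualE
  rw [lintegral_finset_sum_measure]
  refine Finset.sum_congr rfl fun i _ => ?_
  have hx : ∀ x, ∫⁻ y, κ x y ∂(∑ j ∈ t, ρ j) = ∑ j ∈ t, ∫⁻ y, κ x y ∂(ρ j) := fun x =>
    lintegral_finset_sum_measure t _ ρ
  simp_rw [hx]
  exact lintegral_finset_sum t (fun j _ => hmeas j)

lemma exists_le_iSup_add {u : ℕ → ℝ≥0∞} {v ε : ℝ≥0∞} (hv : v ≤ ⨆ n, u n) (hvT : v ≠ ⊤)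
    (hε : ε ≠ 0) : ∃ n, v ≤ u n + ε := by
  by_cases h0 : v = 0
  · exact ⟨0, by simp [h0]⟩
  · have hlt : v - ε < v := ENNReal.sub_lt_self hvT h0 hε
    obtain ⟨n, hn⟩ := lt_iSup_iff.1 (hlt.trans_le hv)
    exact ⟨n, by rw [add_comm]; exact tsub_le_iff_left.1 hn.le⟩

/-- Approximation of the mutual energy by mutual energies of compactly supported
restrictions. -/
lemma pair_approx {κ : X → X → ℝ≥0∞} (hκ : LowerSemicontinuous (Function.uncurry κ))
    (σ ρ : Measure X) (hσreg : σ.InnerRegular) (hσfc : IsFiniteMeasureOnCompacts σ)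
    (hρreg : ρ.InnerRegular) (hρsf : SigmaFinite ρ)
    {S1 S2 : Set X} (hS1 : MeasurableSet S1) (hS2 : MeasurableSet S2)
    (hσS : σ S1ᶜ = 0) (hρS : ρ S2ᶜ = 0)
    (hfin : mutualE κ σ ρ ≠ ⊤) {δ : ℝ≥0∞} (hδ0 : δ ≠ 0) :
    ∃ K L, IsCompact K ∧ K ⊆ S1 ∧ IsCompact L ∧ L ⊆ S2 ∧
      mutualE κ σ ρ ≤ mutualE κ (σ.restrict K) (ρ.restrict L) + δ := by
  classical
  have hdiv2 : ∀ {w : ℝ≥0∞}, w ≠ 0 → (w / 2 : ℝ≥0∞) ≠ 0 := by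
    intro w hw hcon
    rw [ENNReal.div_eq_zero_iff] at hcon
    rcases hcon with hcon | hcon
    · exact hw hcon
    · simp at hcon
  have hδ2 : (δ / 2 : ℝ≥0∞) ≠ 0 := hdiv2 hδ0
  have hδ4 : (δ / 2 / 2 : ℝ≥0∞) ≠ 0 := hdiv2 hδ2
  have hδ8 : (δ / 2 / 2 / 2 : ℝ≥0∞) ≠ 0 := hdiv2 hδ4
  -- stage 1 : restrict σ
  obtain ⟨K, hKc, hKS, hK⟩ := key_approx σ hσreg hS1 hσS
    (potOf_measurable hκ ρ hρsf hρreg) hfin hδ2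
  set σK : Measure X := σ.restrict K with hσKdef
  haveI : IsFiniteMeasure σK := ⟨by
    rw [hσKdef, Measure.restrict_apply_univ]; exact hσfc.lt_top_of_isCompact hKc⟩
  have hσKle : σK ≤ σ := Measure.restrict_le_self
  have hσKfin : mutualE κ σK ρ ≠ ⊤ :=
    ne_top_of_le_ne_top hfin (mutualE_mono hσKle le_rfl)
  have hstage1 : mutualE κ σ ρ ≤ mutualE κ σK ρ + δ / 2 := hK
  -- replace ρ by its restriction to S2
  set ρ' : Measure X := ρ.restrict S2 with hρ'def
  haveI : SigmaFinite ρ' := by rw [hρ'def]; infer_instance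
  have hρ'reg : ρ'.InnerRegular := innerRegular_restrict hρreg hS2
  have hρ'le : ρ' ≤ ρ := Measure.restrict_le_self
  have hpot : ∀ (m : Measure X), mutualE κ m ρ = mutualE κ m ρ' := by
    intro m
    unfold mutualE
    refine lintegral_congr fun x => ?_
    conv_lhs => rw [← Measure.restrict_add_restrict_compl (μ := ρ) hS2]
    rw [lintegral_add_measure, Measure.restrict_eq_zero.2 hρS]
    simp [hρ'def]
  have hρ'S : ρ' S2ᶜ = 0 := by
    rw [hρ'def, Measure.restrict_apply hS2.compl]
    simp
  -- stage 2 : cutoff in M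
  set κM : ℕ → X → X → ℝ≥0∞ := fun M x y => min (κ x y) M with hκMdef
  have hκMlsc : ∀ M : ℕ, LowerSemicontinuous (Function.uncurry (κM M)) := fun M =>
    lsc_min_const hκ M
  have hMeq : mutualE κ σK ρ' = ⨆ M : ℕ, ∫⁻ x, ∫⁻ y, κM M x y ∂ρ' ∂σK := by
    calc mutualE κ σK ρ' = ∫⁻ x, ∫⁻ y, κ x y ∂ρ' ∂σK := rfl
      _ = ∫⁻ x, ⨆ M : ℕ, ∫⁻ y, κM M x y ∂ρ' ∂σK := by
          refine lintegral_congr fun x => ?_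
          calc ∫⁻ y, κ x y ∂ρ' = ∫⁻ y, ⨆ M : ℕ, κM M x y ∂ρ' :=
                lintegral_congr fun y => (iSup_min_nat _).symm
            _ = ⨆ M : ℕ, ∫⁻ y, κM M x y ∂ρ' :=
                lintegral_iSup (fun M => (lsc_section hκ x).min measurable_const)
                  (fun M M' hMM' y => min_le_min le_rfl (by exact_mod_cast hMM'))
      _ = ⨆ M : ℕ, ∫⁻ x, ∫⁻ y, κM M x y ∂ρ' ∂σK := by
          refine lintegral_iSup (fun M => ?_) (fun M M' hMM' x => ?_)
          · exact potOf_measurable (hκMlsc M) ρ' inferInstance hρ'reg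
          · exact lintegral_mono fun y => min_le_min le_rfl (by exact_mod_cast hMM')
  have hσKρ'fin : mutualE κ σK ρ' ≠ ⊤ := (hpot σK) ▸ hσKfin
  obtain ⟨M, hMle⟩ := exists_le_iSup_add (le_of_eq hMeq) hσKρ'fin hδ8
  -- stage 2 : cutoff to a finite piece of ρ'
  have hneq : (∫⁻ x, ∫⁻ y, κM M x y ∂ρ' ∂σK) =
      ⨆ n : ℕ, ∫⁻ x, ∫⁻ y, κM M x y ∂(ρ'.restrict (spanningSets ρ' n)) ∂σK := by
    refine Eq.trans (lintegral_congr fun x => ?_)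
      (lintegral_iSup (fun n => ?_) (fun n n' hnn' x => ?_))
    · set w : Measure X := ρ'.withDensity (fun y => κM M x y) with hwdef
      have h1 : ∀ n, ∫⁻ y, κM M x y ∂(ρ'.restrict (spanningSets ρ' n)) =
          w (spanningSets ρ' n) := fun n =>
        (withDensity_apply _ (measurableSet_spanningSets ρ' n)).symm
      have h2 : w univ = ∫⁻ y, κM M x y ∂ρ' := by
        rw [hwdef, withDensity_apply _ MeasurableSet.univ, setLIntegral_univ]
      have h3 : w univ = ⨆ n, w (spanningSets ρ' n) := by
        rw [← iUnion_spanningSets ρ']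
        exact (monotone_spanningSets ρ').directed_le.measure_iUnion
      simp_rw [h1]
      rw [← h3, h2]
    · refine potOf_measurable (hκMlsc M) _ inferInstance
        (innerRegular_restrict hρ'reg (measurableSet_spanningSets ρ' n))
    · exact lintegral_mono' (Measure.restrict_mono (monotone_spanningSets ρ' hnn') le_rfl)
        le_rfl
  have hMfin : (∫⁻ x, ∫⁻ y, κM M x y ∂ρ' ∂σK) ≠ ⊤ := by
    refine ne_top_of_le_ne_top hσKρ'fin ?_
    exact lintegral_mono fun x => lintegral_mono fun y => min_le_left _ _
  obtain ⟨n, hnle⟩ := exists_le_iSup_add (le_of_eq hneq) hMfin hδ8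
  set ρ2 : Measure X := ρ'.restrict (spanningSets ρ' n) with hρ2def
  haveI : IsFiniteMeasure ρ2 := ⟨by
    rw [hρ2def, Measure.restrict_apply_univ]; exact measure_spanningSets_lt_top ρ' n⟩
  have hρ2reg : ρ2.InnerRegular :=
    innerRegular_restrict hρ'reg (measurableSet_spanningSets ρ' n)
  have hρ2S : ρ2 S2ᶜ = 0 := by
    rw [hρ2def, Measure.restrict_apply hS2.compl]
    exact measure_mono_null inter_subset_left hρ'S
  -- stage 2 : choose the compact L
  set δ' : ℝ≥0∞ := (δ / 2 / 2 / 2) / (((M : ℝ≥0∞) + 1) * (σK univ + 1)) with hδ'def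
  have hMσfin : ((M : ℝ≥0∞) + 1) * (σK univ + 1) ≠ ⊤ :=
    ENNReal.mul_ne_top (by simp) (by simp [measure_ne_top])
  have hMσ0 : ((M : ℝ≥0∞) + 1) * (σK univ + 1) ≠ 0 := by simp
  have hδ'0 : δ' ≠ 0 := by
    intro hcon
    rw [hδ'def, ENNReal.div_eq_zero_iff] at hcon
    rcases hcon with hcon | hcon
    · exact hδ8 hcon
    · exact hMσfin hcon
  obtain ⟨L, hLc, hLS, hL⟩ : ∃ L, IsCompact L ∧ L ⊆ S2 ∧ ρ2 Lᶜ ≤ δ' := by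
    set E2 : Set X := S2 ∩ spanningSets ρ' n with hE2def
    have hE2m : MeasurableSet E2 := hS2.inter (measurableSet_spanningSets ρ' n)
    have hE2c : ρ2 E2ᶜ = 0 := by
      rw [hρ2def, Measure.restrict_apply hE2m.compl]
      refine measure_mono_null (fun y hy => ?_) hρ'S
      exact fun hyS2 => hy.1 ⟨hyS2, hy.2⟩
    obtain ⟨L, hLsub, hLc, hL⟩ : ∃ L, L ⊆ E2 ∧ IsCompact L ∧ ρ2 E2 ≤ ρ2 L + δ' := by
      by_cases hcase : ρ2 E2 ≤ δ'
      · exact ⟨∅, empty_subset _, isCompact_empty, hcase.trans le_add_self⟩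
      · push_neg at hcase
        have h0 : ρ2 E2 ≠ 0 := ((pos_iff_ne_zero.2 hδ'0).trans hcase).ne'
        have hr : ρ2 E2 - δ' < ρ2 E2 :=
          ENNReal.sub_lt_self (measure_ne_top ρ2 _) h0 hδ'0
        obtain ⟨L, hLsub, hLc, hL⟩ := hρ2reg.innerRegular hE2m _ hr
        refine ⟨L, hLsub, hLc, ?_⟩
        calc ρ2 E2 = (ρ2 E2 - δ') + δ' := (tsub_add_cancel_of_le hcase.le).symm
          _ ≤ ρ2 L + δ' := add_le_add_left hL.le _
    refine ⟨L, hLc, hLsub.trans inter_subset_left, ?_⟩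
    have hsplit : (Lᶜ : Set X) ⊆ (E2 \ L) ∪ E2ᶜ := by
      intro y hy
      by_cases hyE : y ∈ E2
      · exact Or.inl ⟨hyE, hy⟩
      · exact Or.inr hyE
    calc ρ2 Lᶜ ≤ ρ2 ((E2 \ L) ∪ E2ᶜ) := measure_mono hsplit
      _ ≤ ρ2 (E2 \ L) + ρ2 E2ᶜ := measure_union_le _ _
      _ = ρ2 (E2 \ L) := by rw [hE2c, add_zero]
      _ ≤ δ' := by
          rw [measure_diff hLsub hLc.measurableSet.nullMeasurableSet (measure_ne_top ρ2 L)]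
          exact tsub_le_iff_right.2 (by rwa [add_comm] at hL)
  -- assemble stage 2
  have hsplit2 : (∫⁻ x, ∫⁻ y, κM M x y ∂ρ2 ∂σK) ≤
      (∫⁻ x, ∫⁻ y, κM M x y ∂(ρ2.restrict L) ∂σK) + δ / 2 / 2 / 2 := by
    have hpt : ∀ x, (∫⁻ y, κM M x y ∂ρ2) ≤
        (∫⁻ y, κM M x y ∂(ρ2.restrict L)) + (M : ℝ≥0∞) * ρ2 Lᶜ := by
      intro x
      conv_lhs => rw [← Measure.restrict_add_restrict_compl (μ := ρ2) hLc.measurableSet]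
      rw [lintegral_add_measure]
      refine add_le_add_right ?_ _
      calc (∫⁻ y, κM M x y ∂(ρ2.restrict Lᶜ)) ≤ ∫⁻ _, (M : ℝ≥0∞) ∂(ρ2.restrict Lᶜ) :=
            lintegral_mono fun y => min_le_right _ _
        _ = (M : ℝ≥0∞) * ρ2 Lᶜ := by
            rw [lintegral_const, Measure.restrict_apply_univ]
    calc (∫⁻ x, ∫⁻ y, κM M x y ∂ρ2 ∂σK)
        ≤ ∫⁻ x, (∫⁻ y, κM M x y ∂(ρ2.restrict L)) + (M : ℝ≥0∞) * ρ2 Lᶜ ∂σK :=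
          lintegral_mono hpt
      _ = (∫⁻ x, ∫⁻ y, κM M x y ∂(ρ2.restrict L) ∂σK) + ((M : ℝ≥0∞) * ρ2 Lᶜ) * σK univ := by
          rw [lintegral_add_right _ measurable_const, lintegral_const]
      _ ≤ (∫⁻ x, ∫⁻ y, κM M x y ∂(ρ2.restrict L) ∂σK) + δ / 2 / 2 / 2 := by
          refine add_le_add_right ?_ _
          calc ((M : ℝ≥0∞) * ρ2 Lᶜ) * σK univ ≤ ((M : ℝ≥0∞) * δ') * σK univ :=
                mul_le_mul_left (mul_le_mul_right hL _) _
            _ ≤ (((M : ℝ≥0∞) + 1) * δ') * (σK univ + 1) :=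
                mul_le_mul' (mul_le_mul_left le_self_add _) le_self_add
            _ = (((M : ℝ≥0∞) + 1) * (σK univ + 1)) * δ' := by ring
            _ = δ / 2 / 2 / 2 := by
                rw [hδ'def, ENNReal.mul_div_cancel hMσ0 hMσfin]
  have hfinal2 : (∫⁻ x, ∫⁻ y, κM M x y ∂(ρ2.restrict L) ∂σK) ≤
      mutualE κ σK (ρ.restrict L) := by
    have hle : ρ2.restrict L ≤ ρ.restrict L := by
      refine Measure.le_iff.2 fun t ht => ?_
      rw [Measure.restrict_apply ht, Measure.restrict_apply ht]
      calc ρ2 (t ∩ L) ≤ ρ' (t ∩ L) := Measure.le_iff'.1 Measure.restrict_le_self _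
        _ ≤ ρ (t ∩ L) := Measure.le_iff'.1 Measure.restrict_le_self _
    refine lintegral_mono fun x => ?_
    calc (∫⁻ y, κM M x y ∂(ρ2.restrict L)) ≤ ∫⁻ y, κ x y ∂(ρ2.restrict L) :=
          lintegral_mono fun y => min_le_left _ _
      _ ≤ ∫⁻ y, κ x y ∂(ρ.restrict L) := lintegral_mono' hle le_rfl
  refine ⟨K, L, hKc, hKS, hLc, hLS, ?_⟩
  have hchain : mutualE κ σK ρ ≤ mutualE κ σK (ρ.restrict L) + δ / 2 := by
    calc mutualE κ σK ρ = mutualE κ σK ρ' := hpot σK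
      _ ≤ (∫⁻ x, ∫⁻ y, κM M x y ∂ρ' ∂σK) + δ / 2 / 2 / 2 := hMle
      _ ≤ ((∫⁻ x, ∫⁻ y, κM M x y ∂ρ2 ∂σK) + δ / 2 / 2 / 2) + δ / 2 / 2 / 2 :=
          add_le_add_left hnle _
      _ ≤ (((∫⁻ x, ∫⁻ y, κM M x y ∂(ρ2.restrict L) ∂σK) + δ / 2 / 2 / 2)
            + δ / 2 / 2 / 2) + δ / 2 / 2 / 2 :=
          add_le_add_left (add_le_add_left hsplit2 _) _
      _ ≤ ((mutualE κ σK (ρ.restrict L) + δ / 2 / 2 / 2) + δ / 2 / 2 / 2) + δ / 2 / 2 / 2 :=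
          add_le_add_left (add_le_add_left (add_le_add_left hfinal2 _) _) _
      _ = mutualE κ σK (ρ.restrict L) + (δ / 2 / 2 / 2 + δ / 2 / 2 / 2 + δ / 2 / 2 / 2) := by
          ring
      _ ≤ mutualE κ σK (ρ.restrict L) + δ / 2 := by
          refine add_le_add_right ?_ _
          calc δ / 2 / 2 / 2 + δ / 2 / 2 / 2 + δ / 2 / 2 / 2
              ≤ δ / 2 / 2 / 2 + δ / 2 / 2 / 2 + (δ / 2 / 2 / 2 + δ / 2 / 2 / 2) :=
                add_le_add_right le_self_add _
            _ = δ / 2 / 2 + δ / 2 / 2 := by rw [ENNReal.add_halves]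
            _ = δ / 2 := ENNReal.add_halves _
  calc mutualE κ σ ρ ≤ mutualE κ σK ρ + δ / 2 := hstage1
    _ ≤ (mutualE κ σK (ρ.restrict L) + δ / 2) + δ / 2 := add_le_add_left hchain _
    _ = mutualE κ (σ.restrict K) (ρ.restrict L) + δ := by
        rw [add_assoc, ENNReal.add_halves]


/-- Main approximation: any measure in `E(A,a,g)` can be approximated in energy by
measures of `E⁰(A,a,g)` with compactly supported coordinates. -/
lemma main_approx {X : Type} [TopologicalSpace X] [T2Space X] [MeasurableSpace X]
    [OpensMeasurableSpace X]
    {κ : X → X → ℝ≥0∞} (hker : IsKernel κ)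
    {m p : ℕ} {A : Condenser X m p}
    {g : X → ℝ} (hgc : Continuous g) (hgpos : ∀ x, 0 < g x)
    {a : Fin (m + p) → ℝ} (ha : ∀ i, 0 < a i)
    (μ : Fin (m + p) → Measure X) (h : inEAb κ A (aVec a) g μ)
    {ε : ℝ} (hε : 0 < ε) :
    ∃ ν, inE0b κ A (aVec a) g ν ∧
      assocNormSq κ m p ν ≤ assocNormSq κ m p μ + ε := by
  classical
  have hκ : LowerSemicontinuous (Function.uncurry κ) := hker
  -- basic data
  set b : Fin (m + p) → ℝ≥0∞ := fun i => ENNReal.ofReal (a i) with hbdef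
  have hb0 : ∀ i, b i ≠ 0 := fun i => (ENNReal.ofReal_pos.2 (ha i)).ne'
  have hbT : ∀ i, b i ≠ ⊤ := fun i => ENNReal.ofReal_ne_top
  have hgb : ∀ i, gInt g (μ i) = b i := h.2
  have hreg : ∀ i, (μ i).InnerRegular := fun i => (h.1.1 i).1.1
  have hfc : ∀ i, IsFiniteMeasureOnCompacts (μ i) := fun i => (h.1.1 i).1.2
  have hgm : Measurable (fun x => ENNReal.ofReal (g x)) := hgc.measurable.ennreal_ofReal
  have hgInt : ∀ i, (∫⁻ x, ENNReal.ofReal (g x) ∂(μ i)) ≠ ⊤ := fun i => by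
    rw [show (∫⁻ x, ENNReal.ofReal (g x) ∂(μ i)) = gInt g (μ i) from rfl, hgb i]
    exact hbT i
  have hsf : ∀ i, SigmaFinite (μ i) := fun i =>
    sigmaFinite_of_weight hgm (fun x => ENNReal.ofReal_pos.2 (hgpos x)) (μ i) (hgInt i)
  -- carriers
  have hcarrier : ∀ i, ∃ S : Set X, MeasurableSet S ∧ S ⊆ A.plate i ∧ μ i Sᶜ = 0 := by
    intro i
    obtain ⟨B, hB1, hB2, hB3⟩ := exists_measurable_superset_of_null ((h.1.1 i).2)
    exact ⟨Bᶜ, hB2.compl, compl_subset_comm.2 hB1, by rwa [compl_compl]⟩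
  choose S hSm hSsub hS0 using hcarrier
  -- Finsets and energies
  set Fp : Finset (Fin (m + p)) := Finset.univ.filter (fun i => (i : ℕ) < m) with hFpdef
  set Fm : Finset (Fin (m + p)) := Finset.univ.filter (fun i => ¬ (i : ℕ) < m) with hFmdef
  set P : Measure X := Rpos m p μ with hPdef
  set Q : Measure X := Rneg m p μ with hQdef
  have hPsum : P = ∑ i ∈ Fp, μ i := rfl
  have hQsum : Q = ∑ i ∈ Fm, μ i := rfl
  have hFE := h.1.2
  have he11T : mutualE κ P P ≠ ⊤ := hFE.1.ne
  have he22T : mutualE κ Q Q ≠ ⊤ := hFE.2.1.ne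
  have he12T : mutualE κ P Q ≠ ⊤ := hFE.2.2.1.ne
  have he21T : mutualE κ Q P ≠ ⊤ := hFE.2.2.2.ne
  have hμleP : ∀ i ∈ Fp, μ i ≤ P := fun i hi => hPsum ▸ meas_single_le_sum hi
  have hμleQ : ∀ i ∈ Fm, μ i ≤ Q := fun i hi => hQsum ▸ meas_single_le_sum hi
  have hmemP : ∀ i : Fin (m + p), (i : ℕ) < m → i ∈ Fp := fun i hi =>
    Finset.mem_filter.2 ⟨Finset.mem_univ _, hi⟩
  have hmemQ : ∀ i : Fin (m + p), ¬ (i : ℕ) < m → i ∈ Fm := fun i hi =>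
    Finset.mem_filter.2 ⟨Finset.mem_univ _, hi⟩
  have hEfin : ∀ i j, mutualE κ (μ i) (μ j) ≠ ⊤ := by
    intro i j
    by_cases hi : (i : ℕ) < m <;> by_cases hj : (j : ℕ) < m
    · exact ne_top_of_le_ne_top he11T (mutualE_mono (hμleP i (hmemP i hi)) (hμleP j (hmemP j hj)))
    · exact ne_top_of_le_ne_top he12T (mutualE_mono (hμleP i (hmemP i hi)) (hμleQ j (hmemQ j hj)))
    · exact ne_top_of_le_ne_top he21T (mutualE_mono (hμleQ i (hmemQ i hi)) (hμleP j (hmemP j hj)))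
    · exact ne_top_of_le_ne_top he22T (mutualE_mono (hμleQ i (hmemQ i hi)) (hμleQ j (hmemQ j hj)))
  -- the small parameter
  set N : ℕ := Fp.card * Fm.card with hNdef
  set d : ℝ := (mutualE κ P P + mutualE κ Q Q).toReal with hddef
  have hd0 : 0 ≤ d := ENNReal.toReal_nonneg
  set ρ : ℝ := min 1 (ε / (3 * d + 4 * N + 1)) with hρdef
  have hden : (0:ℝ) < 3 * d + 4 * N + 1 := by positivity
  have hρpos : 0 < ρ := lt_min one_pos (div_pos hε hden)
  have hρ1 : ρ ≤ 1 := min_le_left _ _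
  have hρmul : ρ * (3 * d + 4 * N + 1) ≤ ε := by
    have h1 := min_le_right 1 (ε / (3 * d + 4 * N + 1))
    calc ρ * (3 * d + 4 * N + 1) ≤ (ε / (3 * d + 4 * N + 1)) * (3 * d + 4 * N + 1) :=
          mul_le_mul_of_nonneg_right h1 hden.le
      _ = ε := div_mul_cancel₀ ε hden.ne'
  set ρh : ℝ≥0∞ := ENNReal.ofReal ρ with hρhdef
  have hρh0 : ρh ≠ 0 := (ENNReal.ofReal_pos.2 hρpos).ne'
  have hρhT : ρh ≠ ⊤ := ENNReal.ofReal_ne_top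
  set C : ℝ≥0∞ := 1 + ρh with hCdef
  have hC0 : C ≠ 0 := by simp [hCdef]
  have hCT : C ≠ ⊤ := by simp [hCdef, hρhT]
  have hC1 : 1 ≤ C := le_self_add
  have hdivlt : ∀ i, b i / C < b i := by
    intro i
    rw [ENNReal.div_lt_iff (Or.inl hC0) (Or.inl hCT)]
    calc b i = b i * 1 := (mul_one _).symm
      _ < b i * C := by
          refine ENNReal.mul_lt_mul_right (hb0 i) (hbT i) ?_
          exact ENNReal.lt_add_right (by simp) hρh0
  -- compacts capturing the g-masses
  have hKg0 : ∀ i, ∃ K, IsCompact K ∧ K ⊆ S i ∧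
      ∫⁻ x, ENNReal.ofReal (g x) ∂(μ i) ≤
        ∫⁻ x in K, ENNReal.ofReal (g x) ∂(μ i) + (b i - b i / C) := by
    intro i
    exact key_approx (μ i) (hreg i) (hSm i) (hS0 i) hgm (hgInt i)
      (tsub_pos_of_lt (hdivlt i)).ne'
  choose Kg hKgc hKgS hKg using hKg0
  -- compacts capturing all the mutual energies, for every ordered pair
  have hKL0 : ∀ i j, ∃ K L, IsCompact K ∧ K ⊆ S i ∧ IsCompact L ∧ L ⊆ S j ∧
      mutualE κ (μ i) (μ j) ≤
        mutualE κ ((μ i).restrict K) ((μ j).restrict L) + ρh := fun i j =>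
    pair_approx hκ (μ i) (μ j) (hreg i) (hfc i) (hreg j) (hsf j)
      (hSm i) (hSm j) (hS0 i) (hS0 j) (hEfin i j) hρh0
  choose KK LL hKKc hKKS hLLc hLLS hKL using hKL0
  -- the final compacts
  set K : Fin (m + p) → Set X := fun i =>
    Kg i ∪ ((⋃ j, KK i j) ∪ ⋃ j, LL j i) with hKdef
  have hKc : ∀ i, IsCompact (K i) := fun i =>
    (hKgc i).union ((isCompact_iUnion fun j => hKKc i j).union
      (isCompact_iUnion fun j => hLLc j i))
  have hKS : ∀ i, K i ⊆ S i := fun i =>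
    union_subset (hKgS i) (union_subset (iUnion_subset fun j => hKKS i j)
      (iUnion_subset fun j => hLLS j i))
  have hKgK : ∀ i, Kg i ⊆ K i := fun i => subset_union_left
  have hKKK : ∀ i j, KK i j ⊆ K i := fun i j =>
    ((subset_iUnion (fun j => KK i j) j).trans subset_union_left).trans subset_union_right
  have hLLK : ∀ i j, LL i j ⊆ K j := fun i j =>
    ((subset_iUnion (fun i' => LL i' j) i).trans subset_union_right).trans subset_union_right
  set τ : Fin (m + p) → Measure X := fun i => (μ i).restrict (K i) with hτdef
  have hτle : ∀ i, τ i ≤ μ i := fun i => Measure.restrict_le_self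
  -- the per-pair estimate
  have hpair : ∀ i j, mutualE κ (μ i) (μ j) ≤ mutualE κ (τ i) (τ j) + ρh := by
    intro i j
    refine (hKL i j).trans (add_le_add_left (mutualE_mono ?_ ?_) _)
    · exact Measure.restrict_mono (hKKK i j) le_rfl
    · exact Measure.restrict_mono (hLLK i j) le_rfl
  -- g-masses of the restricted measures
  set s : Fin (m + p) → ℝ≥0∞ := fun i => gInt g (τ i) with hsdef
  have hsu : ∀ i, s i ≤ b i := fun i =>
    (hgb i) ▸ lintegral_mono' (hτle i) le_rfl
  have hsl : ∀ i, b i / C ≤ s i := by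
    intro i
    refine slack_le (hbT i) (hdivlt i).le ?_
    calc b i = ∫⁻ x, ENNReal.ofReal (g x) ∂(μ i) := (hgb i).symm
      _ ≤ ∫⁻ x in Kg i, ENNReal.ofReal (g x) ∂(μ i) + (b i - b i / C) := hKg i
      _ ≤ s i + (b i - b i / C) := by
          refine add_le_add_left ?_ _
          exact lintegral_mono' (Measure.restrict_mono (hKgK i) le_rfl) le_rfl
  have hs0 : ∀ i, s i ≠ 0 := fun i =>
    ((ENNReal.div_pos (hb0 i) hCT).trans_le (hsl i)).ne'
  have hsT : ∀ i, s i ≠ ⊤ := fun i => ne_top_of_le_ne_top (hbT i) (hsu i)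
  set c : Fin (m + p) → ℝ≥0∞ := fun i => b i / s i with hcdef
  have hc1 : ∀ i, 1 ≤ c i := by
    intro i
    rw [hcdef]
    rw [ENNReal.le_div_iff_mul_le (Or.inl (hs0 i)) (Or.inl (hsT i)), one_mul]
    exact hsu i
  have hcC : ∀ i, c i ≤ C := by
    intro i
    have hbc : b i / (b i / C) = C := by
      rw [div_eq_mul_inv (b i) C, div_eq_mul_inv,
        ENNReal.mul_inv (Or.inl (hb0 i)) (Or.inl (hbT i)), inv_inv, ← mul_assoc,
        ENNReal.mul_inv_cancel (hb0 i) (hbT i), one_mul]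
    calc c i = b i / s i := rfl
      _ ≤ b i / (b i / C) := ENNReal.div_le_div le_rfl (hsl i)
      _ = C := hbc
  have hcT : ∀ i, c i ≠ ⊤ := fun i => ne_top_of_le_ne_top hCT (hcC i)
  set ν : Fin (m + p) → Measure X := fun i => c i • τ i with hνdef
  -- measurability of potentials
  have hμmeas : ∀ j, Measurable (potOf κ (μ j)) := fun j =>
    potOf_measurable hκ (μ j) (hsf j) (hreg j)
  have hτmeas : ∀ j, Measurable (potOf κ (τ j)) := fun j =>
    potOf_measurable hκ (τ j) (by haveI := hsf j; exact inferInstance)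
      (innerRegular_restrict (hreg j) (hKc j).measurableSet)
  -- decompositions
  have hPQ : mutualE κ P Q = ∑ i ∈ Fp, ∑ j ∈ Fm, mutualE κ (μ i) (μ j) := by
    rw [hPsum, hQsum]; exact mutualE_sum Fp Fm μ μ hμmeas
  have hQP : mutualE κ Q P = ∑ j ∈ Fm, ∑ i ∈ Fp, mutualE κ (μ j) (μ i) := by
    rw [hPsum, hQsum]; exact mutualE_sum Fm Fp μ μ hμmeas
  set Pt : Measure X := ∑ i ∈ Fp, τ i with hPtdef
  set Qt : Measure X := ∑ j ∈ Fm, τ j with hQtdef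
  have hPQt : mutualE κ Pt Qt = ∑ i ∈ Fp, ∑ j ∈ Fm, mutualE κ (τ i) (τ j) :=
    mutualE_sum Fp Fm τ τ hτmeas
  have hQPt : mutualE κ Qt Pt = ∑ j ∈ Fm, ∑ i ∈ Fp, mutualE κ (τ j) (τ i) :=
    mutualE_sum Fm Fp τ τ hτmeas
  have hPtP : Pt ≤ P := hPsum ▸ meas_sum_le_sum fun i _ => hτle i
  have hQtQ : Qt ≤ Q := hQsum ▸ meas_sum_le_sum fun i _ => hτle i
  -- sums of the slack
  have hconst : ∀ (F G : Finset (Fin (m + p))),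
      (∑ _i ∈ F, ∑ _j ∈ G, (ρh : ℝ≥0∞)) = (F.card * G.card : ℕ) * ρh := by
    intro F G
    simp [Finset.sum_const, nsmul_eq_mul, mul_assoc]
  have hX12 : mutualE κ P Q ≤ mutualE κ Pt Qt + (N : ℝ≥0∞) * ρh := by
    rw [hPQ, hPQt, hNdef]
    calc ∑ i ∈ Fp, ∑ j ∈ Fm, mutualE κ (μ i) (μ j)
        ≤ ∑ i ∈ Fp, ∑ j ∈ Fm, (mutualE κ (τ i) (τ j) + ρh) :=
          Finset.sum_le_sum fun i _ => Finset.sum_le_sum fun j _ => hpair i j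
      _ = (∑ i ∈ Fp, ∑ j ∈ Fm, mutualE κ (τ i) (τ j)) + ((Fp.card * Fm.card : ℕ) : ℝ≥0∞) * ρh := by
          rw [← hconst Fp Fm, ← Finset.sum_add_distrib]
          exact Finset.sum_congr rfl fun i _ => Finset.sum_add_distrib
  have hX21 : mutualE κ Q P ≤ mutualE κ Qt Pt + (N : ℝ≥0∞) * ρh := by
    rw [hQP, hQPt, hNdef]
    calc ∑ j ∈ Fm, ∑ i ∈ Fp, mutualE κ (μ j) (μ i)
        ≤ ∑ j ∈ Fm, ∑ i ∈ Fp, (mutualE κ (τ j) (τ i) + ρh) :=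
          Finset.sum_le_sum fun j _ => Finset.sum_le_sum fun i _ => hpair j i
      _ = (∑ j ∈ Fm, ∑ i ∈ Fp, mutualE κ (τ j) (τ i)) + ((Fp.card * Fm.card : ℕ) : ℝ≥0∞) * ρh := by
          rw [mul_comm Fp.card Fm.card, ← hconst Fm Fp, ← Finset.sum_add_distrib]
          exact Finset.sum_congr rfl fun i _ => Finset.sum_add_distrib
  -- comparison of R-images
  set Pν : Measure X := Rpos m p ν with hPνdef
  set Qν : Measure X := Rneg m p ν with hQνdef
  have hPνsum : Pν = ∑ i ∈ Fp, c i • τ i := rfl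
  have hQνsum : Qν = ∑ i ∈ Fm, c i • τ i := rfl
  have hPtPν : Pt ≤ Pν := by
    rw [hPνsum, hPtdef]
    exact meas_sum_le_sum fun i _ => meas_le_smul (hc1 i)
  have hQtQν : Qt ≤ Qν := by
    rw [hQνsum, hQtdef]
    exact meas_sum_le_sum fun i _ => meas_le_smul (hc1 i)
  have hPνC : Pν ≤ C • Pt := by
    rw [hPνsum, hPtdef, Finset.smul_sum]
    exact meas_sum_le_sum fun i _ => meas_smul_le_smul (hcC i)
  have hQνC : Qν ≤ C • Qt := by
    rw [hQνsum, hQtdef, Finset.smul_sum]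
    exact meas_sum_le_sum fun i _ => meas_smul_le_smul (hcC i)
  -- energy bounds for ν
  have hsmul2 : ∀ (w w' : Measure X), mutualE κ (C • w) (C • w') = C * (C * mutualE κ w w') :=
    fun w w' => by rw [mutualE_smul_left, mutualE_smul_right hCT]
  have hE11' : mutualE κ Pν Pν ≤ C * (C * mutualE κ P P) := by
    calc mutualE κ Pν Pν ≤ mutualE κ (C • Pt) (C • Pt) := mutualE_mono hPνC hPνC
      _ = C * (C * mutualE κ Pt Pt) := hsmul2 _ _
      _ ≤ C * (C * mutualE κ P P) :=
          mul_le_mul_right (mul_le_mul_right (mutualE_mono hPtP hPtP) _) _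
  have hE22' : mutualE κ Qν Qν ≤ C * (C * mutualE κ Q Q) := by
    calc mutualE κ Qν Qν ≤ mutualE κ (C • Qt) (C • Qt) := mutualE_mono hQνC hQνC
      _ = C * (C * mutualE κ Qt Qt) := hsmul2 _ _
      _ ≤ C * (C * mutualE κ Q Q) :=
          mul_le_mul_right (mul_le_mul_right (mutualE_mono hQtQ hQtQ) _) _
  have hE12' : mutualE κ Pν Qν ≤ C * (C * mutualE κ P Q) := by
    calc mutualE κ Pν Qν ≤ mutualE κ (C • Pt) (C • Qt) := mutualE_mono hPνC hQνC
      _ = C * (C * mutualE κ Pt Qt) := hsmul2 _ _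
      _ ≤ C * (C * mutualE κ P Q) :=
          mul_le_mul_right (mul_le_mul_right (mutualE_mono hPtP hQtQ) _) _
  have hE21' : mutualE κ Qν Pν ≤ C * (C * mutualE κ Q P) := by
    calc mutualE κ Qν Pν ≤ mutualE κ (C • Qt) (C • Pt) := mutualE_mono hQνC hPνC
      _ = C * (C * mutualE κ Qt Pt) := hsmul2 _ _
      _ ≤ C * (C * mutualE κ Q P) :=
          mul_le_mul_right (mul_le_mul_right (mutualE_mono hQtQ hPtP) _) _
  have hE12low : mutualE κ P Q ≤ mutualE κ Pν Qν + (N : ℝ≥0∞) * ρh :=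
    hX12.trans (add_le_add_left (mutualE_mono hPtPν hQtQν) _)
  have hE21low : mutualE κ Q P ≤ mutualE κ Qν Pν + (N : ℝ≥0∞) * ρh :=
    hX21.trans (add_le_add_left (mutualE_mono hQtQν hPtPν) _)
  -- membership of ν in E⁰(A,a,g)
  have hgν : ∀ i, gInt g (ν i) = b i := by
    intro i
    have h1 : gInt g (ν i) = c i * s i := lintegral_smul_measure _ _
    rw [h1, hcdef]
    exact ENNReal.div_mul_cancel (hs0 i) (hsT i)
  have hτfin : ∀ i, IsFiniteMeasure (τ i) := fun i => ⟨by
    rw [hτdef, Measure.restrict_apply_univ]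
    exact (hfc i).lt_top_of_isCompact (hKc i)⟩
  have hAssoc : Assoc A ν := by
    intro i
    refine ⟨⟨?_, ?_⟩, ?_⟩
    · haveI : (μ i).InnerRegular := hreg i
      haveI : IsFiniteMeasure ((μ i).restrict (K i)) := hτfin i
      exact inferInstance
    · refine ⟨fun Kc hKcc => ?_⟩
      rw [hνdef]
      simp only [Measure.smul_apply, smul_eq_mul]
      refine ENNReal.mul_lt_top (hcT i).lt_top ?_
      calc τ i Kc ≤ τ i univ := measure_mono (subset_univ _)
        _ < ⊤ := (hτfin i).measure_univ_lt_top
    · show ν i (A.plate i)ᶜ = 0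
      rw [hνdef]
      simp only [Measure.smul_apply, smul_eq_mul]
      have hττ : τ i (A.plate i)ᶜ = 0 :=
        le_antisymm (le_trans (Measure.le_iff'.1 (hτle i) _) (le_of_eq ((h.1.1 i).2)))
          zero_le
      rw [hττ, mul_zero]
  have hFE' : FinEnergy κ (Rpair m p ν) := by
    have hfin4 : ∀ (w w' : Measure X), mutualE κ w w' ≠ ⊤ →
        C * (C * mutualE κ w w') < ⊤ := fun w w' hw =>
      ENNReal.mul_lt_top hCT.lt_top (ENNReal.mul_lt_top hCT.lt_top hw.lt_top)
    exact ⟨hE11'.trans_lt (hfin4 _ _ he11T), hE22'.trans_lt (hfin4 _ _ he22T),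
      hE12'.trans_lt (hfin4 _ _ he12T), hE21'.trans_lt (hfin4 _ _ he21T)⟩
  have hsupp : ∀ i, ∃ Kc : Set X, IsCompact Kc ∧ Kc ⊆ A.plate i ∧ ConcOn (ν i) Kc := by
    intro i
    refine ⟨K i, hKc i, (hKS i).trans (hSsub i), ?_⟩
    show ν i (K i)ᶜ = 0
    rw [hνdef]
    simp only [Measure.smul_apply, smul_eq_mul]
    rw [hτdef]
    simp only
    rw [Measure.restrict_apply (hKc i).measurableSet.compl, compl_inter_self, measure_empty,
      mul_zero]
  have hν0 : inE0b κ A (aVec a) g ν := ⟨⟨⟨hAssoc, hFE'⟩, hgν⟩, hsupp⟩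
  refine ⟨ν, hν0, ?_⟩
  -- the energy comparison, in the reals
  have hassocν : assocNormSq κ m p ν =
      (mutualE κ Pν Pν + mutualE κ Qν Qν).toReal -
        (mutualE κ Pν Qν + mutualE κ Qν Pν).toReal := rfl
  have hassocμ : assocNormSq κ m p μ =
      (mutualE κ P P + mutualE κ Q Q).toReal -
        (mutualE κ P Q + mutualE κ Q P).toReal := rfl
  set D : ℝ≥0∞ := mutualE κ P P + mutualE κ Q Q with hDdef
  set Xc : ℝ≥0∞ := mutualE κ P Q + mutualE κ Q P with hXcdef
  set D' : ℝ≥0∞ := mutualE κ Pν Pν + mutualE κ Qν Qν with hD'def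
  set X' : ℝ≥0∞ := mutualE κ Pν Qν + mutualE κ Qν Pν with hX'def
  have hDT : D ≠ ⊤ := by
    rw [hDdef]; exact ENNReal.add_ne_top.2 ⟨he11T, he22T⟩
  have hXcT : Xc ≠ ⊤ := by
    rw [hXcdef]; exact ENNReal.add_ne_top.2 ⟨he12T, he21T⟩
  have hCCT : C * C ≠ ⊤ := ENNReal.mul_ne_top hCT hCT
  have hD'le : D' ≤ (C * C) * D := by
    rw [hD'def, hDdef, mul_add (C * C)]
    exact add_le_add (by rw [mul_assoc]; exact hE11') (by rw [mul_assoc]; exact hE22')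
  have hX'le : X' ≤ (C * C) * Xc := by
    rw [hX'def, hXcdef, mul_add (C * C)]
    exact add_le_add (by rw [mul_assoc]; exact hE12') (by rw [mul_assoc]; exact hE21')
  have hD'T : D' ≠ ⊤ := ne_top_of_le_ne_top (ENNReal.mul_ne_top hCCT hDT) hD'le
  have hX'T : X' ≠ ⊤ := ne_top_of_le_ne_top (ENNReal.mul_ne_top hCCT hXcT) hX'le
  have hXlow : Xc ≤ X' + ((N : ℝ≥0∞) * ρh + (N : ℝ≥0∞) * ρh) := by
    rw [hXcdef, hX'def]
    calc mutualE κ P Q + mutualE κ Q P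
        ≤ (mutualE κ Pν Qν + (N : ℝ≥0∞) * ρh) + (mutualE κ Qν Pν + (N : ℝ≥0∞) * ρh) :=
          add_le_add hE12low hE21low
      _ = mutualE κ Pν Qν + mutualE κ Qν Pν + ((N : ℝ≥0∞) * ρh + (N : ℝ≥0∞) * ρh) := by
          ring
  -- to the reals
  have hNρT : ((N : ℝ≥0∞) * ρh + (N : ℝ≥0∞) * ρh) ≠ ⊤ := by
    refine ENNReal.add_ne_top.2 ⟨?_, ?_⟩ <;>
      exact ENNReal.mul_ne_top (by simp) hρhT
  have hNρreal : ((N : ℝ≥0∞) * ρh + (N : ℝ≥0∞) * ρh).toReal = 2 * N * ρ := by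
    rw [ENNReal.toReal_add (ENNReal.mul_ne_top (by simp) hρhT)
      (ENNReal.mul_ne_top (by simp) hρhT), ENNReal.toReal_mul, ENNReal.toReal_natCast,
      hρhdef, ENNReal.toReal_ofReal hρpos.le]
    ring
  have hD'r : D'.toReal ≤ (1 + ρ) * (1 + ρ) * d := by
    have h1 : D'.toReal ≤ ((C * C) * D).toReal :=
      ENNReal.toReal_mono (ENNReal.mul_ne_top hCCT hDT) hD'le
    have h2 : ((C * C) * D).toReal = (1 + ρ) * (1 + ρ) * d := by
      rw [ENNReal.toReal_mul, ENNReal.toReal_mul, hCdef,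
        ENNReal.toReal_add (by simp) hρhT, ENNReal.toReal_one, hρhdef,
        ENNReal.toReal_ofReal hρpos.le, hddef]
    rw [h2] at h1
    exact h1
  have hXr : Xc.toReal ≤ X'.toReal + 2 * N * ρ := by
    have h1 : Xc.toReal ≤ (X' + ((N : ℝ≥0∞) * ρh + (N : ℝ≥0∞) * ρh)).toReal :=
      ENNReal.toReal_mono (ENNReal.add_ne_top.2 ⟨hX'T, hNρT⟩) hXlow
    rwa [ENNReal.toReal_add hX'T hNρT, hNρreal] at h1
  have hXr0 : 0 ≤ X'.toReal := ENNReal.toReal_nonneg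
  have hdd : D.toReal = d := rfl
  rw [hassocν, hassocμ]
  have hDrd : (mutualE κ P P + mutualE κ Q Q).toReal = d := rfl
  have hslack : (2 * ρ + ρ * ρ) * d + 2 * N * ρ ≤ ε := by
    nlinarith [mul_nonneg (mul_nonneg hρpos.le hρpos.le) hd0, mul_nonneg hρpos.le hd0,
      mul_nonneg (Nat.cast_nonneg (α := ℝ) N) hρpos.le]
  nlinarith [hD'r, hXr, hXr0, hslack, ENNReal.toReal_nonneg (a := Xc)]

end Stmt2aux

end Stmt2Aux

open Zorii in
/-- Corollary 1: `‖E(A,a,g)‖² = ‖E⁰(A,a,g)‖²`. -/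
theorem statement2
    {X : Type} [TopologicalSpace X] [T2Space X] [LocallyCompactSpace X]
    [MeasurableSpace X] [BorelSpace X]
    (κ : X → X → ℝ≥0∞) (hker : IsKernel κ) (hpd : PositiveDefinite κ)
    (m p : ℕ) (hm : 0 < m) (A : Condenser X m p)
    (g : X → ℝ) (hgc : Continuous g) (hgpos : ∀ x, 0 < g x)
    (a : Fin (m + p) → ℝ) (ha : ∀ i, 0 < a i) :
    minE κ A (aVec a) g = minE0 κ A (aVec a) g := by
  refine le_antisymm ?_ ?_
  · -- E⁰ ⊆ E, so the infimum over E is smaller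
    refine le_iInf₂ fun ν hν => ?_
    exact iInf₂_le ν hν.1
  · refine le_iInf₂ fun μ hμ => ?_
    refine ENNReal.le_of_forall_pos_le_add fun ε hε _ => ?_
    obtain ⟨ν, hν, hle⟩ := Stmt2aux.main_approx hker hgc hgpos ha μ hμ
      (ε := (ε : ℝ)) (by exact_mod_cast hε)
    calc minE0 κ A (aVec a) g ≤ ENNReal.ofReal (assocNormSq κ m p ν) := iInf₂_le ν hν
      _ ≤ ENNReal.ofReal (assocNormSq κ m p μ + ε) := ENNReal.ofReal_le_ofReal hle
      _ ≤ ENNReal.ofReal (assocNormSq κ m p μ) + ENNReal.ofReal ε := ENNReal.ofReal_add_le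
      _ = ENNReal.ofReal (assocNormSq κ m p μ) + ε := by rw [ENNReal.ofReal_coe_nnreal]
end
end
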